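/- arXiv:2211.03916 — 4 statements merged into one kernel-verified Lean document; each statement's English description precedes it below -/
import Mathlib

section
/- There exists a universal constant C_win > 0 such that the following holds. Let w ≥ 1, k, ℓ be natural numbers with w < k and w < ℓ, let A be a k×k×ℓ×ℓ array with nonnegative entries summing to 1, let Â be any k×k×ℓ×ℓ real array, and let δ > 0. Suppose that for every a,b ∈ {1,…,k} and i,j ∈ {1,…,ℓ}, A^{−w}(a,b,i,j) − δ ≤ Â(a,b,i,j) ≤ A^{+w}(a,b,i,j) + δ. Then, setting M := Proj(A) and M̂ := Proj(Â), it holds that ‖M̂ − M^{∼w}‖₁ ≤ δ·(kℓ)² + C_win/w. -/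
open Finset

/-- The 1-dimensional window `Win^{w,ℓ}(i) = {i' ∈ {1,…,ℓ} : |i' − i| ≤ w}`. -/
def Win (w l i : ℕ) : Finset ℕ :=
  (Finset.Icc 1 l).filter fun i' => i' ≤ i + w ∧ i ≤ i' + w

/-- The 4-dimensional window
`Win^{w,k,ℓ}(a,b,i,j) = Win^{w,k}(a) × Win^{w,k}(b) × Win^{w,ℓ}(i) × Win^{w,ℓ}(j)`. -/
def Win4 (w k l a b i j : ℕ) : Finset (ℕ × ℕ × ℕ × ℕ) :=
  Win w k a ×ˢ Win w k b ×ˢ Win w l i ×ˢ Win w l j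

/-- All index quadruples `{1,…,k}² × {1,…,ℓ}²`. -/
def Icc4 (k l : ℕ) : Finset (ℕ × ℕ × ℕ × ℕ) :=
  Finset.Icc 1 k ×ˢ Finset.Icc 1 k ×ˢ Finset.Icc 1 l ×ˢ Finset.Icc 1 l

/-- The normalization factor `ν^{∼w,ℓ}(i,j) = 1/|Win^{w,ℓ}(i,j)|`. -/
noncomputable def nu2 (w l i j : ℕ) : ℝ := 1 / ((Win w l i ×ˢ Win w l j).card : ℝ)

/-- The smoothed matrix `M^{∼w}`. -/
noncomputable def smooth2 (w l : ℕ) (M : ℕ → ℕ → ℝ) (i j : ℕ) : ℝ :=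
  ∑ p ∈ Win w l i ×ˢ Win w l j, nu2 w l p.1 p.2 * M p.1 p.2

/-- The normalization factor `ν^{∼w,k,ℓ}(a,b,i,j) = 1/|Win^{w,k,ℓ}(a,b,i,j)|`. -/
noncomputable def nu4 (w k l : ℕ) (q : ℕ × ℕ × ℕ × ℕ) : ℝ :=
  1 / ((Win4 w k l q.1 q.2.1 q.2.2.1 q.2.2.2).card : ℝ)

/-- The smoothed array `A^{∼w}`. -/
noncomputable def smooth4 (w k l : ℕ) (A : ℕ × ℕ × ℕ × ℕ → ℝ) (q : ℕ × ℕ × ℕ × ℕ) : ℝ :=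
  ∑ q' ∈ Win4 w k l q.1 q.2.1 q.2.2.1 q.2.2.2, nu4 w k l q' * A q'

/-- The lower-bound normalization factor `ν^{−w,k,ℓ}`: the minimum of `ν^{∼w,k,ℓ}` over the
`1`-window around the given quadruple. -/
noncomputable def nuMinus (w k l : ℕ) (q : ℕ × ℕ × ℕ × ℕ) : ℝ :=
  if h : (Win4 1 k l q.1 q.2.1 q.2.2.1 q.2.2.2).Nonempty then
    (Win4 1 k l q.1 q.2.1 q.2.2.1 q.2.2.2).inf' h (nu4 w k l)
  else 0

/-- The upper-bound normalization factor `ν^{+w,k,ℓ}`: the maximum of `ν^{∼w,k,ℓ}` over the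
`1`-window around the given quadruple. -/
noncomputable def nuPlus (w k l : ℕ) (q : ℕ × ℕ × ℕ × ℕ) : ℝ :=
  if h : (Win4 1 k l q.1 q.2.1 q.2.2.1 q.2.2.2).Nonempty then
    (Win4 1 k l q.1 q.2.1 q.2.2.1 q.2.2.2).sup' h (nu4 w k l)
  else 0

/-- The lower-bound array `A^{−w}`. -/
noncomputable def AMinus (w k l : ℕ) (A : ℕ × ℕ × ℕ × ℕ → ℝ) (q : ℕ × ℕ × ℕ × ℕ) : ℝ :=
  ∑ q' ∈ Win4 (w - 1) k l q.1 q.2.1 q.2.2.1 q.2.2.2, nuMinus w k l q' * A q'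

/-- The upper-bound array `A^{+w}`. -/
noncomputable def APlus (w k l : ℕ) (A : ℕ × ℕ × ℕ × ℕ → ℝ) (q : ℕ × ℕ × ℕ × ℕ) : ℝ :=
  ∑ q' ∈ Win4 (w + 1) k l q.1 q.2.1 q.2.2.1 q.2.2.2, nuPlus w k l q' * A q'

/-- The projection of a `k×k×ℓ×ℓ` array onto its last two coordinates. -/
noncomputable def Proj (k : ℕ) (A : ℕ × ℕ × ℕ × ℕ → ℝ) (i j : ℕ) : ℝ :=
  ∑ a ∈ Finset.Icc 1 k, ∑ b ∈ Finset.Icc 1 k, A (a, b, i, j)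

/-- Entrywise 1-norm distance between `ℓ×ℓ` matrices. -/
noncomputable def l1Mat (l : ℕ) (M N : ℕ → ℕ → ℝ) : ℝ :=
  ∑ i ∈ Finset.Icc 1 l, ∑ j ∈ Finset.Icc 1 l, |M i j - N i j|

/-- Entrywise 1-norm distance between `k×k×ℓ×ℓ` arrays. -/
noncomputable def l1Arr (k l : ℕ) (A B : ℕ × ℕ × ℕ × ℕ → ℝ) : ℝ :=
  ∑ q ∈ Icc4 k l, |A q - B q|

/-! ### Auxiliary lemmas -/

lemma mem_Win {w l i x : ℕ} : x ∈ Win w l i ↔ (1 ≤ x ∧ x ≤ l) ∧ x ≤ i + w ∧ i ≤ x + w := by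
  simp [Win, Finset.mem_filter, Finset.mem_Icc]

lemma Win_subset_Icc (w l i : ℕ) : Win w l i ⊆ Finset.Icc 1 l := Finset.filter_subset _ _

lemma self_mem_Win {w l i : ℕ} (hi : i ∈ Finset.Icc 1 l) : i ∈ Win w l i := by
  simp at hi; simp [mem_Win]; omega

lemma Win_symm {w l i x : ℕ} (hx : x ∈ Finset.Icc 1 l) (hi : i ∈ Finset.Icc 1 l) :
    (x ∈ Win w l i ↔ i ∈ Win w l x) := by
  simp at hx hi; simp [mem_Win]; omega

lemma Win_mono {w w' : ℕ} (h : w ≤ w') (l i : ℕ) : Win w l i ⊆ Win w' l i := by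
  intro x hx; rw [mem_Win] at hx ⊢; omega

lemma Win_shift {w l i i'' : ℕ} (h1 : i ≤ i'' + 1) (h2 : i'' ≤ i + 1) :
    Win w l i ⊆ Win (w + 1) l i'' := by
  intro x hx; rw [mem_Win] at hx ⊢; omega

lemma Win_card_le {w l i : ℕ} : (Win (w + 2) l i).card ≤ (Win w l i).card + 4 := by
  have hsub : Win (w + 2) l i ⊆ Win w l i ∪ {i + w + 1, i + w + 2, i - (w+1), i - (w+2)} := by
    intro x hx; rw [mem_Win] at hx
    simp [Finset.mem_union, mem_Win]
    omega
  calc (Win (w + 2) l i).card ≤ (Win w l i ∪ {i + w + 1, i + w + 2, i - (w+1), i - (w+2)}).card :=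
        Finset.card_le_card hsub
    _ ≤ (Win w l i).card + ({i + w + 1, i + w + 2, i - (w+1), i - (w+2)} : Finset ℕ).card :=
        Finset.card_union_le _ _
    _ ≤ (Win w l i).card + 4 := by
        have : ({i + w + 1, i + w + 2, i - (w+1), i - (w+2)} : Finset ℕ).card ≤ 4 := by
          apply le_trans (Finset.card_insert_le _ _)
          apply le_trans (Nat.add_le_add_right (Finset.card_insert_le _ _) 1)
          have : ({i - (w+1), i - (w+2)} : Finset ℕ).card ≤ 2 := by
            apply le_trans (Finset.card_insert_le _ _)
            simp
          omega
        omega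

lemma Win_card_ge {w l i : ℕ} (hw : w < l) (hi : i ∈ Finset.Icc 1 l) :
    w + 1 ≤ (Win w l i).card := by
  simp at hi
  by_cases h : i + w ≤ l
  · calc w + 1 = (Finset.Icc i (i + w)).card := by rw [Nat.card_Icc]; omega
      _ ≤ (Win w l i).card := by
        apply Finset.card_le_card
        intro x hx; simp [Finset.mem_Icc] at hx; rw [mem_Win]; omega
  · calc w + 1 = (Finset.Icc (l - w) l).card := by rw [Nat.card_Icc]; omega
      _ ≤ (Win w l i).card := by
        apply Finset.card_le_card
        intro x hx; simp [Finset.mem_Icc] at hx; rw [mem_Win]; omega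

lemma mem_Win4 {w k l a b i j : ℕ} {q : ℕ × ℕ × ℕ × ℕ} :
    q ∈ Win4 w k l a b i j ↔ q.1 ∈ Win w k a ∧ q.2.1 ∈ Win w k b ∧ q.2.2.1 ∈ Win w l i ∧ q.2.2.2 ∈ Win w l j := by
  simp [Win4, Finset.mem_product]

lemma mem_Icc4 {k l : ℕ} {q : ℕ × ℕ × ℕ × ℕ} :
    q ∈ Icc4 k l ↔ q.1 ∈ Finset.Icc 1 k ∧ q.2.1 ∈ Finset.Icc 1 k ∧ q.2.2.1 ∈ Finset.Icc 1 l ∧ q.2.2.2 ∈ Finset.Icc 1 l := by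
  simp [Icc4, Finset.mem_product]

lemma Win4_card (w k l a b i j : ℕ) :
    (Win4 w k l a b i j).card = (Win w k a).card * ((Win w k b).card * ((Win w l i).card * (Win w l j).card)) := by
  simp [Win4, Finset.card_product]

lemma Win4_subset_Icc4 (w k l a b i j : ℕ) : Win4 w k l a b i j ⊆ Icc4 k l := by
  intro q hq; rw [mem_Win4] at hq; rw [mem_Icc4]
  exact ⟨Win_subset_Icc _ _ _ hq.1, Win_subset_Icc _ _ _ hq.2.1,
    Win_subset_Icc _ _ _ hq.2.2.1, Win_subset_Icc _ _ _ hq.2.2.2⟩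

lemma self_mem_Win4 {w k l : ℕ} {q : ℕ × ℕ × ℕ × ℕ} (hq : q ∈ Icc4 k l) :
    q ∈ Win4 w k l q.1 q.2.1 q.2.2.1 q.2.2.2 := by
  rw [mem_Icc4] at hq
  rw [mem_Win4]
  exact ⟨self_mem_Win hq.1, self_mem_Win hq.2.1, self_mem_Win hq.2.2.1, self_mem_Win hq.2.2.2⟩

lemma Win4_nonempty {w k l : ℕ} {q : ℕ × ℕ × ℕ × ℕ} (hq : q ∈ Icc4 k l) :
    (Win4 w k l q.1 q.2.1 q.2.2.1 q.2.2.2).Nonempty := ⟨q, self_mem_Win4 hq⟩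

lemma nu4_nonneg (w k l : ℕ) (q : ℕ × ℕ × ℕ × ℕ) : 0 ≤ nu4 w k l q := by
  unfold nu4; positivity

lemma nuPlus_nonneg (w k l : ℕ) (q : ℕ × ℕ × ℕ × ℕ) : 0 ≤ nuPlus w k l q := by
  unfold nuPlus
  split
  · rename_i h
    obtain ⟨x, hx⟩ := h
    exact le_trans (nu4_nonneg w k l x) (Finset.le_sup' _ hx)
  · exact le_refl 0

lemma nu4_le_nuPlus {w k l : ℕ} {q : ℕ × ℕ × ℕ × ℕ} (hq : q ∈ Icc4 k l) :
    nu4 w k l q ≤ nuPlus w k l q := by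
  unfold nuPlus
  rw [dif_pos (Win4_nonempty hq)]
  exact Finset.le_sup' _ (self_mem_Win4 hq)

lemma nuMinus_le_nu4 {w k l : ℕ} {q : ℕ × ℕ × ℕ × ℕ} (hq : q ∈ Icc4 k l) :
    nuMinus w k l q ≤ nu4 w k l q := by
  unfold nuMinus
  rw [dif_pos (Win4_nonempty hq)]
  exact Finset.inf'_le _ (self_mem_Win4 hq)

lemma Win4_shift {w k l : ℕ} {q q'' : ℕ × ℕ × ℕ × ℕ} (hw : 1 ≤ w)
    (h : q'' ∈ Win4 1 k l q.1 q.2.1 q.2.2.1 q.2.2.2) :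
    Win4 (w - 1) k l q.1 q.2.1 q.2.2.1 q.2.2.2 ⊆ Win4 w k l q''.1 q''.2.1 q''.2.2.1 q''.2.2.2 := by
  rw [mem_Win4] at h
  obtain ⟨h1, h2, h3, h4⟩ := h
  rw [mem_Win] at h1 h2 h3 h4
  have hww : w - 1 + 1 = w := by omega
  intro x hx
  rw [mem_Win4] at hx ⊢
  refine ⟨?_, ?_, ?_, ?_⟩
  · exact hww ▸ Win_shift (by omega) (by omega) hx.1
  · exact hww ▸ Win_shift (by omega) (by omega) hx.2.1
  · exact hww ▸ Win_shift (by omega) (by omega) hx.2.2.1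
  · exact hww ▸ Win_shift (by omega) (by omega) hx.2.2.2

lemma Win4_shift' {w k l : ℕ} {q q'' : ℕ × ℕ × ℕ × ℕ}
    (h : q'' ∈ Win4 1 k l q.1 q.2.1 q.2.2.1 q.2.2.2) :
    Win4 w k l q''.1 q''.2.1 q''.2.2.1 q''.2.2.2 ⊆ Win4 (w + 1) k l q.1 q.2.1 q.2.2.1 q.2.2.2 := by
  rw [mem_Win4] at h
  obtain ⟨h1, h2, h3, h4⟩ := h
  rw [mem_Win] at h1 h2 h3 h4
  intro x hx
  rw [mem_Win4] at hx ⊢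
  exact ⟨Win_shift (by omega) (by omega) hx.1, Win_shift (by omega) (by omega) hx.2.1,
    Win_shift (by omega) (by omega) hx.2.2.1, Win_shift (by omega) (by omega) hx.2.2.2⟩

lemma nuPlus_le {w k l : ℕ} {q : ℕ × ℕ × ℕ × ℕ} (hw : 1 ≤ w) (hk : w < k) (hl : w < l)
    (hq : q ∈ Icc4 k l) :
    nuPlus w k l q ≤ 1 / ((Win4 (w - 1) k l q.1 q.2.1 q.2.2.1 q.2.2.2).card : ℝ) := by
  unfold nuPlus
  rw [dif_pos (Win4_nonempty hq)]
  apply Finset.sup'_le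
  intro q'' hq''
  unfold nu4
  apply one_div_le_one_div_of_le
  · have hq4 : q ∈ Icc4 k l := hq
    rw [mem_Icc4] at hq4
    have h1 : w - 1 + 1 ≤ (Win (w-1) k q.1).card := Win_card_ge (by omega) hq4.1
    have h2 : w - 1 + 1 ≤ (Win (w-1) k q.2.1).card := Win_card_ge (by omega) hq4.2.1
    have h3 : w - 1 + 1 ≤ (Win (w-1) l q.2.2.1).card := Win_card_ge (by omega) hq4.2.2.1
    have h4 : w - 1 + 1 ≤ (Win (w-1) l q.2.2.2).card := Win_card_ge (by omega) hq4.2.2.2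
    rw [Win4_card]
    have : 0 < (Win (w-1) k q.1).card * ((Win (w-1) k q.2.1).card * ((Win (w-1) l q.2.2.1).card * (Win (w-1) l q.2.2.2).card)) :=
      Nat.mul_pos (by omega) (Nat.mul_pos (by omega) (Nat.mul_pos (by omega) (by omega)))
    exact_mod_cast this
  · exact_mod_cast Finset.card_le_card (Win4_shift hw hq'')

lemma nuMinus_ge {w k l : ℕ} {q : ℕ × ℕ × ℕ × ℕ} (hw : 1 ≤ w)
    (hq : q ∈ Icc4 k l) :
    1 / (((Win (w-1) k q.1).card + 4 : ℝ) * (((Win (w-1) k q.2.1).card + 4) * (((Win (w-1) l q.2.2.1).card + 4) * ((Win (w-1) l q.2.2.2).card + 4)))) ≤ nuMinus w k l q := by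
  unfold nuMinus
  rw [dif_pos (Win4_nonempty hq)]
  apply Finset.le_inf'
  intro q'' hq''
  unfold nu4
  have hcard : ((Win4 w k l q''.1 q''.2.1 q''.2.2.1 q''.2.2.2).card : ℝ)
      ≤ ((Win (w-1) k q.1).card + 4 : ℝ) * (((Win (w-1) k q.2.1).card + 4) * (((Win (w-1) l q.2.2.1).card + 4) * ((Win (w-1) l q.2.2.2).card + 4))) := by
    have hsub := Finset.card_le_card (Win4_shift' (w := w) hq'')
    rw [Win4_card, Win4_card] at hsub
    have hww : w + 1 = w - 1 + 2 := by omega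
    have e1 : (Win (w+1) k q.1).card ≤ (Win (w-1) k q.1).card + 4 := hww ▸ Win_card_le
    have e2 : (Win (w+1) k q.2.1).card ≤ (Win (w-1) k q.2.1).card + 4 := hww ▸ Win_card_le
    have e3 : (Win (w+1) l q.2.2.1).card ≤ (Win (w-1) l q.2.2.1).card + 4 := hww ▸ Win_card_le
    have e4 : (Win (w+1) l q.2.2.2).card ≤ (Win (w-1) l q.2.2.2).card + 4 := hww ▸ Win_card_le
    rw [Win4_card]
    have : (Win w k q''.1).card * ((Win w k q''.2.1).card * ((Win w l q''.2.2.1).card * (Win w l q''.2.2.2).card)) ≤ ((Win (w-1) k q.1).card + 4) * (((Win (w-1) k q.2.1).card + 4) * (((Win (w-1) l q.2.2.1).card + 4) * ((Win (w-1) l q.2.2.2).card + 4))) := by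
      calc _ ≤ (Win (w+1) k q.1).card * ((Win (w+1) k q.2.1).card * ((Win (w+1) l q.2.2.1).card * (Win (w+1) l q.2.2.2).card)) := hsub
        _ ≤ _ := by
          apply Nat.mul_le_mul e1
          apply Nat.mul_le_mul e2
          exact Nat.mul_le_mul e3 e4
    exact_mod_cast this
  apply one_div_le_one_div_of_le
  · have hq''4 : q'' ∈ Icc4 k l := Win4_subset_Icc4 1 k l _ _ _ _ hq''
    have : 0 < (Win4 w k l q''.1 q''.2.1 q''.2.2.1 q''.2.2.2).card :=
      Finset.card_pos.2 (Win4_nonempty hq''4)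
    exact_mod_cast this
  · exact hcard

lemma swap_general {α : Type*} [DecidableEq α] (s : Finset α) (t : α → Finset α)
    (hsub : ∀ a, t a ⊆ s) (hsymm : ∀ a ∈ s, ∀ b ∈ s, (a ∈ t b ↔ b ∈ t a)) (f : α → ℝ) :
    ∑ a ∈ s, ∑ b ∈ t a, f b = ∑ b ∈ s, ((t b).card : ℝ) * f b := by
  have h1 : ∀ a ∈ s, ∑ b ∈ t a, f b = ∑ b ∈ s, if b ∈ t a then f b else 0 := by
    intro a _
    rw [← Finset.sum_filter]
    congr 1
    rw [Finset.filter_mem_eq_inter, Finset.inter_eq_right.2 (hsub a)]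
  rw [Finset.sum_congr rfl h1, Finset.sum_comm]
  apply Finset.sum_congr rfl
  intro b hb
  have h2 : ∀ a ∈ s, (if b ∈ t a then f b else 0) = if a ∈ t b then f b else 0 := by
    intro a ha
    simp only [hsymm b hb a ha]
  rw [Finset.sum_congr rfl h2, ← Finset.sum_filter, Finset.sum_const,
    Finset.filter_mem_eq_inter, Finset.inter_eq_right.2 (hsub b), nsmul_eq_mul]

lemma ratio_le (w' c : ℝ) (hw : 1 ≤ w') (hc : w' ≤ c) : (c+4)/c ≤ (w'+4)/w' := by
  rw [div_le_div_iff₀ (by linarith) (by linarith)]; nlinarith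

lemma ratio_ge (w' c : ℝ) (hw : 1 ≤ w') (hc : w' ≤ c) : w'/(w'+4) ≤ c/(c+4) := by
  rw [div_le_div_iff₀ (by linarith) (by linarith)]; nlinarith

lemma prod4_le (w' ca cb ci cj : ℝ) (hw : 1 ≤ w') (ha : w' ≤ ca) (hb : w' ≤ cb)
    (hi : w' ≤ ci) (hj : w' ≤ cj) :
    (ca+4)*((cb+4)*((ci+4)*(cj+4))) * (1/(ca*(cb*(ci*cj)))) ≤ ((w'+4)/w')^4 := by
  have hca : (0:ℝ) < ca := by linarith
  have hcb : (0:ℝ) < cb := by linarith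
  have hci : (0:ℝ) < ci := by linarith
  have hcj : (0:ℝ) < cj := by linarith
  have heq : (ca+4)*((cb+4)*((ci+4)*(cj+4))) * (1/(ca*(cb*(ci*cj))))
      = ((ca+4)/ca)*(((cb+4)/cb)*(((ci+4)/ci)*((cj+4)/cj))) := by
    field_simp
  rw [heq, show ((w'+4)/w')^4 = ((w'+4)/w')*(((w'+4)/w')*(((w'+4)/w')*((w'+4)/w'))) by ring]
  have h1 := ratio_le w' ca hw ha
  have h2 := ratio_le w' cb hw hb
  have h3 := ratio_le w' ci hw hi
  have h4 := ratio_le w' cj hw hj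
  gcongr <;> positivity

lemma prod4_ge (w' ca cb ci cj : ℝ) (hw : 1 ≤ w') (ha : w' ≤ ca) (hb : w' ≤ cb)
    (hi : w' ≤ ci) (hj : w' ≤ cj) :
    (w'/(w'+4))^4 ≤ ca*(cb*(ci*cj)) * (1/((ca+4)*((cb+4)*((ci+4)*(cj+4))))) := by
  have hca : (0:ℝ) < ca := by linarith
  have hcb : (0:ℝ) < cb := by linarith
  have hci : (0:ℝ) < ci := by linarith
  have hcj : (0:ℝ) < cj := by linarith
  have heq : ca*(cb*(ci*cj)) * (1/((ca+4)*((cb+4)*((ci+4)*(cj+4)))))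
      = (ca/(ca+4))*((cb/(cb+4))*((ci/(ci+4))*(cj/(cj+4)))) := by
    field_simp
  rw [heq, show (w'/(w'+4))^4 = (w'/(w'+4))*((w'/(w'+4))*((w'/(w'+4))*(w'/(w'+4)))) by ring]
  have h1 := ratio_ge w' ca hw ha
  have h2 := ratio_ge w' cb hw hb
  have h3 := ratio_ge w' ci hw hi
  have h4 := ratio_ge w' cj hw hj
  gcongr <;> positivity

lemma numeric (w' : ℝ) (hw : 1 ≤ w') : ((w'+4)/w')^4 - (w'/(w'+4))^4 ≤ 640 / w' := by
  have hw0 : (0:ℝ) < w' := by linarith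
  have e1 : ((w'+4)/w')^4 ≤ 1 + 624/w' := by
    set t : ℝ := 4/w' with ht
    have ht0 : 0 < t := by positivity
    have ht4 : t ≤ 4 := by rw [ht, div_le_iff₀ hw0]; nlinarith
    have hR : (w'+4)/w' = 1 + t := by rw [ht]; field_simp
    have h2 : t^2 ≤ 4*t := by nlinarith
    have h3 : t^3 ≤ 16*t := by nlinarith
    have h4 : t^4 ≤ 64*t := by nlinarith
    have : (1+t)^4 ≤ 1 + 156*t := by nlinarith
    have h624 : 156*t = 624/w' := by rw [ht]; ring
    rw [hR]
    linarith
  have e2 : 1 - 16/w' ≤ (w'/(w'+4))^4 := by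
    by_cases hcase : 4 ≤ w'
    · set u : ℝ := 4/w' with hu
      have hu0 : 0 < u := by positivity
      have hu1 : u ≤ 1 := by rw [hu, div_le_one hw0]; linarith
      have hs : 1 - u ≤ w'/(w'+4) := by
        rw [hu, le_div_iff₀ (by linarith)]
        field_simp
        nlinarith
      have hs0 : (0:ℝ) ≤ 1 - u := by linarith
      have hp : (1-u)^4 ≤ (w'/(w'+4))^4 := by
        apply pow_le_pow_left₀ hs0 hs
      have hb : 1 - 4*u ≤ (1-u)^4 := by nlinarith [sq_nonneg u, sq_nonneg (1-u), sq_nonneg (u*(1-u)), mul_nonneg (mul_nonneg hu0.le hu0.le) hu0.le]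
      have : 4*u = 16/w' := by rw [hu]; ring
      linarith
    · push_neg at hcase
      have : (4:ℝ) < 16/w' := by rw [lt_div_iff₀ hw0]; nlinarith
      have h0 : (0:ℝ) ≤ (w'/(w'+4))^4 := by positivity
      linarith
  have : 624/w' + 16/w' = 640/w' := by ring
  linarith

lemma Win_card_pos {w l i : ℕ} (hi : i ∈ Finset.Icc 1 l) : 0 < (Win w l i).card :=
  Finset.card_pos.2 ⟨i, self_mem_Win hi⟩

/-- The projection of the smoothed array equals the smoothed projection. -/
lemma proj_smooth (w k l : ℕ) (A : ℕ × ℕ × ℕ × ℕ → ℝ) (i j : ℕ) :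
    smooth2 w l (Proj k A) i j
      = ∑ a ∈ Finset.Icc 1 k, ∑ b ∈ Finset.Icc 1 k, smooth4 w k l A (a, b, i, j) := by
  have hsmooth4 : ∀ a b : ℕ, smooth4 w k l A (a, b, i, j)
      = ∑ p' ∈ Win w k a ×ˢ Win w k b, ∑ r ∈ Win w l i ×ˢ Win w l j,
          nu4 w k l (p'.1, p'.2, r.1, r.2) * A (p'.1, p'.2, r.1, r.2) := by
    intro a b
    unfold smooth4 Win4
    simp only [Finset.sum_product]
  have hsub : ∀ p : ℕ × ℕ, (Win w k p.1 ×ˢ Win w k p.2) ⊆ Finset.Icc 1 k ×ˢ Finset.Icc 1 k :=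
    fun p => Finset.product_subset_product (Win_subset_Icc _ _ _) (Win_subset_Icc _ _ _)
  have hsymm : ∀ p ∈ Finset.Icc 1 k ×ˢ Finset.Icc 1 k, ∀ p'' ∈ Finset.Icc 1 k ×ˢ Finset.Icc 1 k,
      (p ∈ Win w k p''.1 ×ˢ Win w k p''.2 ↔ p'' ∈ Win w k p.1 ×ˢ Win w k p.2) := by
    intro p hp p'' hp''
    rw [Finset.mem_product] at hp hp'' ⊢
    rw [Finset.mem_product]
    rw [Win_symm hp.1 hp''.1, Win_symm hp.2 hp''.2]
  rw [← Finset.sum_product']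
  calc smooth2 w l (Proj k A) i j
      = ∑ r ∈ Win w l i ×ˢ Win w l j, ∑ p' ∈ Finset.Icc 1 k ×ˢ Finset.Icc 1 k,
          nu2 w l r.1 r.2 * A (p'.1, p'.2, r.1, r.2) := by
        unfold smooth2 Proj
        apply Finset.sum_congr rfl
        intro r _
        rw [← Finset.sum_product', Finset.mul_sum]
    _ = ∑ p' ∈ Finset.Icc 1 k ×ˢ Finset.Icc 1 k, ∑ r ∈ Win w l i ×ˢ Win w l j,
          nu2 w l r.1 r.2 * A (p'.1, p'.2, r.1, r.2) := Finset.sum_comm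
    _ = ∑ p' ∈ Finset.Icc 1 k ×ˢ Finset.Icc 1 k,
          ((Win w k p'.1 ×ˢ Win w k p'.2).card : ℝ) * ∑ r ∈ Win w l i ×ˢ Win w l j,
            nu4 w k l (p'.1, p'.2, r.1, r.2) * A (p'.1, p'.2, r.1, r.2) := by
        apply Finset.sum_congr rfl
        intro p' hp'
        rw [Finset.mul_sum]
        apply Finset.sum_congr rfl
        intro r hr
        have hca : 0 < (Win w k p'.1).card := Win_card_pos (Finset.mem_product.1 hp').1
        have hcb : 0 < (Win w k p'.2).card := Win_card_pos (Finset.mem_product.1 hp').2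
        have hci : 0 < (Win w l r.1).card :=
          Win_card_pos (Win_subset_Icc _ _ _ (Finset.mem_product.1 hr).1)
        have hcj : 0 < (Win w l r.2).card :=
          Win_card_pos (Win_subset_Icc _ _ _ (Finset.mem_product.1 hr).2)
        have hkey : nu2 w l r.1 r.2
            = ((Win w k p'.1 ×ˢ Win w k p'.2).card : ℝ) * nu4 w k l (p'.1, p'.2, r.1, r.2) := by
          simp only [nu2, nu4, Win4_card, Finset.card_product]
          have c1 : ((Win w k p'.1).card : ℝ) ≠ 0 := by positivity
          have c2 : ((Win w k p'.2).card : ℝ) ≠ 0 := by positivity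
          have c3 : ((Win w l r.1).card : ℝ) ≠ 0 := by positivity
          have c4 : ((Win w l r.2).card : ℝ) ≠ 0 := by positivity
          push_cast
          field_simp
        rw [hkey, mul_assoc]
    _ = ∑ p ∈ Finset.Icc 1 k ×ˢ Finset.Icc 1 k, ∑ p' ∈ Win w k p.1 ×ˢ Win w k p.2,
          ∑ r ∈ Win w l i ×ˢ Win w l j,
            nu4 w k l (p'.1, p'.2, r.1, r.2) * A (p'.1, p'.2, r.1, r.2) :=
        (swap_general _ _ hsub hsymm _).symm
    _ = ∑ p ∈ Finset.Icc 1 k ×ˢ Finset.Icc 1 k, smooth4 w k l A (p.1, p.2, i, j) := by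
        apply Finset.sum_congr rfl
        intro p _
        exact (hsmooth4 p.1 p.2).symm

lemma Win4_mono {w w' : ℕ} (h : w ≤ w') (k l a b i j : ℕ) :
    Win4 w k l a b i j ⊆ Win4 w' k l a b i j := by
  intro q hq; rw [mem_Win4] at hq ⊢
  exact ⟨Win_mono h _ _ hq.1, Win_mono h _ _ hq.2.1, Win_mono h _ _ hq.2.2.1,
    Win_mono h _ _ hq.2.2.2⟩

lemma AMinus_le_smooth4 {w k l : ℕ} (hw : 1 ≤ w) {A : ℕ × ℕ × ℕ × ℕ → ℝ}
    (hA : ∀ q ∈ Icc4 k l, 0 ≤ A q) {q : ℕ × ℕ × ℕ × ℕ} (hq : q ∈ Icc4 k l) :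
    AMinus w k l A q ≤ smooth4 w k l A q := by
  unfold AMinus smooth4
  calc ∑ q' ∈ Win4 (w-1) k l q.1 q.2.1 q.2.2.1 q.2.2.2, nuMinus w k l q' * A q'
      ≤ ∑ q' ∈ Win4 (w-1) k l q.1 q.2.1 q.2.2.1 q.2.2.2, nu4 w k l q' * A q' := by
        apply Finset.sum_le_sum
        intro q' hq'
        have hq'4 : q' ∈ Icc4 k l := Win4_subset_Icc4 _ _ _ _ _ _ _ hq'
        exact mul_le_mul_of_nonneg_right (nuMinus_le_nu4 hq'4) (hA q' hq'4)
    _ ≤ ∑ q' ∈ Win4 w k l q.1 q.2.1 q.2.2.1 q.2.2.2, nu4 w k l q' * A q' := by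
        apply Finset.sum_le_sum_of_subset_of_nonneg (Win4_mono (by omega) _ _ _ _ _ _)
        intro q' hq' _
        have hq'4 : q' ∈ Icc4 k l := Win4_subset_Icc4 _ _ _ _ _ _ _ hq'
        exact mul_nonneg (nu4_nonneg _ _ _ _) (hA q' hq'4)

lemma smooth4_le_APlus {w k l : ℕ} {A : ℕ × ℕ × ℕ × ℕ → ℝ}
    (hA : ∀ q ∈ Icc4 k l, 0 ≤ A q) {q : ℕ × ℕ × ℕ × ℕ} (hq : q ∈ Icc4 k l) :
    smooth4 w k l A q ≤ APlus w k l A q := by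
  unfold APlus smooth4
  calc ∑ q' ∈ Win4 w k l q.1 q.2.1 q.2.2.1 q.2.2.2, nu4 w k l q' * A q'
      ≤ ∑ q' ∈ Win4 w k l q.1 q.2.1 q.2.2.1 q.2.2.2, nuPlus w k l q' * A q' := by
        apply Finset.sum_le_sum
        intro q' hq'
        have hq'4 : q' ∈ Icc4 k l := Win4_subset_Icc4 _ _ _ _ _ _ _ hq'
        exact mul_le_mul_of_nonneg_right (nu4_le_nuPlus hq'4) (hA q' hq'4)
    _ ≤ ∑ q' ∈ Win4 (w+1) k l q.1 q.2.1 q.2.2.1 q.2.2.2, nuPlus w k l q' * A q' := by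
        apply Finset.sum_le_sum_of_subset_of_nonneg (Win4_mono (by omega) _ _ _ _ _ _)
        intro q' hq' _
        have hq'4 : q' ∈ Icc4 k l := Win4_subset_Icc4 _ _ _ _ _ _ _ hq'
        exact mul_nonneg (nuPlus_nonneg _ _ _ _) (hA q' hq'4)

lemma Win4_symm {m k l : ℕ} {q q' : ℕ × ℕ × ℕ × ℕ} (hq : q ∈ Icc4 k l) (hq' : q' ∈ Icc4 k l) :
    (q ∈ Win4 m k l q'.1 q'.2.1 q'.2.2.1 q'.2.2.2 ↔ q' ∈ Win4 m k l q.1 q.2.1 q.2.2.1 q.2.2.2) := by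
  rw [mem_Icc4] at hq hq'
  rw [mem_Win4, mem_Win4]
  rw [Win_symm hq.1 hq'.1, Win_symm hq.2.1 hq'.2.1, Win_symm hq.2.2.1 hq'.2.2.1,
    Win_symm hq.2.2.2 hq'.2.2.2]

lemma card_Win4_nuPlus_le {w k l : ℕ} (hw : 1 ≤ w) (hk : w < k) (hl : w < l)
    {q : ℕ × ℕ × ℕ × ℕ} (hq : q ∈ Icc4 k l) :
    ((Win4 (w+1) k l q.1 q.2.1 q.2.2.1 q.2.2.2).card : ℝ) * nuPlus w k l q
      ≤ (((w:ℝ)+4)/w)^4 := by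
  have hq4 := mem_Icc4.1 hq
  have h1 : (w:ℝ) ≤ ((Win (w - 1) k q.1).card : ℝ) := by
    have := Win_card_ge (w := w-1) (by omega) hq4.1
    exact_mod_cast (by omega : w ≤ (Win (w - 1) k q.1).card)
  have h2 : (w:ℝ) ≤ ((Win (w - 1) k q.2.1).card : ℝ) := by
    have := Win_card_ge (w := w-1) (by omega) hq4.2.1
    exact_mod_cast (by omega : w ≤ (Win (w - 1) k q.2.1).card)
  have h3 : (w:ℝ) ≤ ((Win (w - 1) l q.2.2.1).card : ℝ) := by
    have := Win_card_ge (w := w-1) (by omega) hq4.2.2.1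
    exact_mod_cast (by omega : w ≤ (Win (w - 1) l q.2.2.1).card)
  have h4 : (w:ℝ) ≤ ((Win (w - 1) l q.2.2.2).card : ℝ) := by
    have := Win_card_ge (w := w-1) (by omega) hq4.2.2.2
    exact_mod_cast (by omega : w ≤ (Win (w - 1) l q.2.2.2).card)
  have hw1 : (1:ℝ) ≤ (w:ℝ) := by exact_mod_cast hw
  have hcard : ((Win4 (w+1) k l q.1 q.2.1 q.2.2.1 q.2.2.2).card : ℝ)
      ≤ (((Win (w - 1) k q.1).card : ℝ)+4)*((((Win (w - 1) k q.2.1).card : ℝ)+4)*((((Win (w - 1) l q.2.2.1).card : ℝ)+4)*(((Win (w - 1) l q.2.2.2).card : ℝ)+4))) := by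
    have hww : w + 1 = w - 1 + 2 := by omega
    have e1 : (Win (w+1) k q.1).card ≤ (Win (w - 1) k q.1).card + 4 := hww ▸ Win_card_le
    have e2 : (Win (w+1) k q.2.1).card ≤ (Win (w - 1) k q.2.1).card + 4 := hww ▸ Win_card_le
    have e3 : (Win (w+1) l q.2.2.1).card ≤ (Win (w - 1) l q.2.2.1).card + 4 := hww ▸ Win_card_le
    have e4 : (Win (w+1) l q.2.2.2).card ≤ (Win (w - 1) l q.2.2.2).card + 4 := hww ▸ Win_card_le
    rw [Win4_card]
    push_cast
    have := Nat.mul_le_mul e1 (Nat.mul_le_mul e2 (Nat.mul_le_mul e3 e4))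
    exact_mod_cast this
  have hnu : nuPlus w k l q ≤ 1/(((Win (w - 1) k q.1).card : ℝ)*(((Win (w - 1) k q.2.1).card : ℝ)*(((Win (w - 1) l q.2.2.1).card : ℝ)*((Win (w - 1) l q.2.2.2).card : ℝ)))) := by
    have h := nuPlus_le hw hk hl hq
    rw [Win4_card] at h
    push_cast at h
    exact h
  calc ((Win4 (w+1) k l q.1 q.2.1 q.2.2.1 q.2.2.2).card : ℝ) * nuPlus w k l q
      ≤ ((((Win (w - 1) k q.1).card : ℝ)+4)*((((Win (w - 1) k q.2.1).card : ℝ)+4)*((((Win (w - 1) l q.2.2.1).card : ℝ)+4)*(((Win (w - 1) l q.2.2.2).card : ℝ)+4)))) * (1/(((Win (w - 1) k q.1).card : ℝ)*(((Win (w - 1) k q.2.1).card : ℝ)*(((Win (w - 1) l q.2.2.1).card : ℝ)*((Win (w - 1) l q.2.2.2).card : ℝ))))) := by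
        apply mul_le_mul hcard hnu (nuPlus_nonneg _ _ _ _)
        nlinarith [h1, h2, h3, h4, hw1]
    _ ≤ (((w:ℝ)+4)/w)^4 := prod4_le _ _ _ _ _ hw1 h1 h2 h3 h4

lemma card_Win4_nuMinus_ge {w k l : ℕ} (hw : 1 ≤ w) (hk : w < k) (hl : w < l)
    {q : ℕ × ℕ × ℕ × ℕ} (hq : q ∈ Icc4 k l) :
    ((w:ℝ)/((w:ℝ)+4))^4
      ≤ ((Win4 (w - 1) k l q.1 q.2.1 q.2.2.1 q.2.2.2).card : ℝ) * nuMinus w k l q := by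
  have hq4 := mem_Icc4.1 hq
  have h1 : (w:ℝ) ≤ ((Win (w - 1) k q.1).card : ℝ) := by
    have := Win_card_ge (w := w-1) (by omega) hq4.1
    exact_mod_cast (by omega : w ≤ (Win (w - 1) k q.1).card)
  have h2 : (w:ℝ) ≤ ((Win (w - 1) k q.2.1).card : ℝ) := by
    have := Win_card_ge (w := w-1) (by omega) hq4.2.1
    exact_mod_cast (by omega : w ≤ (Win (w - 1) k q.2.1).card)
  have h3 : (w:ℝ) ≤ ((Win (w - 1) l q.2.2.1).card : ℝ) := by
    have := Win_card_ge (w := w-1) (by omega) hq4.2.2.1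
    exact_mod_cast (by omega : w ≤ (Win (w - 1) l q.2.2.1).card)
  have h4 : (w:ℝ) ≤ ((Win (w - 1) l q.2.2.2).card : ℝ) := by
    have := Win_card_ge (w := w-1) (by omega) hq4.2.2.2
    exact_mod_cast (by omega : w ≤ (Win (w - 1) l q.2.2.2).card)
  have hw1 : (1:ℝ) ≤ (w:ℝ) := by exact_mod_cast hw
  have hnu : 1/((((Win (w - 1) k q.1).card : ℝ)+4)*((((Win (w - 1) k q.2.1).card : ℝ)+4)*((((Win (w - 1) l q.2.2.1).card : ℝ)+4)*(((Win (w - 1) l q.2.2.2).card : ℝ)+4)))) ≤ nuMinus w k l q :=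
    nuMinus_ge hw hq
  have hcard : ((Win4 (w - 1) k l q.1 q.2.1 q.2.2.1 q.2.2.2).card : ℝ)
      = ((Win (w - 1) k q.1).card : ℝ)*(((Win (w - 1) k q.2.1).card : ℝ)*(((Win (w - 1) l q.2.2.1).card : ℝ)*((Win (w - 1) l q.2.2.2).card : ℝ))) := by
    rw [Win4_card]; push_cast; ring
  rw [hcard]
  calc ((w:ℝ)/((w:ℝ)+4))^4
      ≤ ((Win (w - 1) k q.1).card : ℝ)*(((Win (w - 1) k q.2.1).card : ℝ)*(((Win (w - 1) l q.2.2.1).card : ℝ)*((Win (w - 1) l q.2.2.2).card : ℝ))) * (1/((((Win (w - 1) k q.1).card : ℝ)+4)*((((Win (w - 1) k q.2.1).card : ℝ)+4)*((((Win (w - 1) l q.2.2.1).card : ℝ)+4)*(((Win (w - 1) l q.2.2.2).card : ℝ)+4))))) :=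
        prod4_ge _ _ _ _ _ hw1 h1 h2 h3 h4
    _ ≤ ((Win (w - 1) k q.1).card : ℝ)*(((Win (w - 1) k q.2.1).card : ℝ)*(((Win (w - 1) l q.2.2.1).card : ℝ)*((Win (w - 1) l q.2.2.2).card : ℝ))) * nuMinus w k l q := by
        apply mul_le_mul_of_nonneg_left hnu
        nlinarith [h1, h2, h3, h4, hw1]

lemma sum_APlus_le {w k l : ℕ} (hw : 1 ≤ w) (hk : w < k) (hl : w < l)
    {A : ℕ × ℕ × ℕ × ℕ → ℝ} (hA : ∀ q ∈ Icc4 k l, 0 ≤ A q)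
    (hA1 : (∑ q ∈ Icc4 k l, A q) = 1) :
    ∑ q ∈ Icc4 k l, APlus w k l A q ≤ (((w:ℝ)+4)/w)^4 := by
  have hswap := swap_general (Icc4 k l)
    (fun q => Win4 (w+1) k l q.1 q.2.1 q.2.2.1 q.2.2.2)
    (fun q => Win4_subset_Icc4 _ _ _ _ _ _ _)
    (fun q hq q' hq' => Win4_symm hq hq')
    (fun q' => nuPlus w k l q' * A q')
  unfold APlus
  rw [hswap]
  calc ∑ q' ∈ Icc4 k l, ((Win4 (w+1) k l q'.1 q'.2.1 q'.2.2.1 q'.2.2.2).card : ℝ)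
        * (nuPlus w k l q' * A q')
      ≤ ∑ q' ∈ Icc4 k l, (((w:ℝ)+4)/w)^4 * A q' := by
        apply Finset.sum_le_sum
        intro q' hq'
        rw [← mul_assoc]
        exact mul_le_mul_of_nonneg_right (card_Win4_nuPlus_le hw hk hl hq') (hA q' hq')
    _ = (((w:ℝ)+4)/w)^4 := by rw [← Finset.mul_sum, hA1, mul_one]

lemma sum_AMinus_ge {w k l : ℕ} (hw : 1 ≤ w) (hk : w < k) (hl : w < l)
    {A : ℕ × ℕ × ℕ × ℕ → ℝ} (hA : ∀ q ∈ Icc4 k l, 0 ≤ A q)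
    (hA1 : (∑ q ∈ Icc4 k l, A q) = 1) :
    ((w:ℝ)/((w:ℝ)+4))^4 ≤ ∑ q ∈ Icc4 k l, AMinus w k l A q := by
  have hswap := swap_general (Icc4 k l)
    (fun q => Win4 (w-1) k l q.1 q.2.1 q.2.2.1 q.2.2.2)
    (fun q => Win4_subset_Icc4 _ _ _ _ _ _ _)
    (fun q hq q' hq' => Win4_symm hq hq')
    (fun q' => nuMinus w k l q' * A q')
  unfold AMinus
  rw [hswap]
  calc ((w:ℝ)/((w:ℝ)+4))^4
      = ∑ q' ∈ Icc4 k l, ((w:ℝ)/((w:ℝ)+4))^4 * A q' := by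
        rw [← Finset.mul_sum, hA1, mul_one]
    _ ≤ ∑ q' ∈ Icc4 k l, ((Win4 (w-1) k l q'.1 q'.2.1 q'.2.2.1 q'.2.2.2).card : ℝ)
        * (nuMinus w k l q' * A q') := by
        apply Finset.sum_le_sum
        intro q' hq'
        rw [← mul_assoc]
        exact mul_le_mul_of_nonneg_right (card_Win4_nuMinus_ge hw hk hl hq') (hA q' hq')

lemma sum4_swap {α : Type*} [AddCommMonoid α] (s₁ s₂ s₃ s₄ : Finset ℕ) (g : ℕ → ℕ → ℕ → ℕ → α) :
    ∑ a ∈ s₁, ∑ b ∈ s₂, ∑ i ∈ s₃, ∑ j ∈ s₄, g a b i j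
    = ∑ i ∈ s₃, ∑ j ∈ s₄, ∑ a ∈ s₁, ∑ b ∈ s₂, g a b i j := by
  calc ∑ a ∈ s₁, ∑ b ∈ s₂, ∑ i ∈ s₃, ∑ j ∈ s₄, g a b i j
      = ∑ a ∈ s₁, ∑ i ∈ s₃, ∑ b ∈ s₂, ∑ j ∈ s₄, g a b i j :=
        Finset.sum_congr rfl fun a _ => Finset.sum_comm
    _ = ∑ i ∈ s₃, ∑ a ∈ s₁, ∑ b ∈ s₂, ∑ j ∈ s₄, g a b i j := Finset.sum_comm
    _ = ∑ i ∈ s₃, ∑ a ∈ s₁, ∑ j ∈ s₄, ∑ b ∈ s₂, g a b i j :=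
        Finset.sum_congr rfl fun i _ => Finset.sum_congr rfl fun a _ => Finset.sum_comm
    _ = ∑ i ∈ s₃, ∑ j ∈ s₄, ∑ a ∈ s₁, ∑ b ∈ s₂, g a b i j :=
        Finset.sum_congr rfl fun i _ => Finset.sum_comm

lemma sum_Icc4 {α : Type*} [AddCommMonoid α] (k l : ℕ) (h : ℕ × ℕ × ℕ × ℕ → α) :
    ∑ q ∈ Icc4 k l, h q
      = ∑ a ∈ Finset.Icc 1 k, ∑ b ∈ Finset.Icc 1 k, ∑ i ∈ Finset.Icc 1 l, ∑ j ∈ Finset.Icc 1 l,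
          h (a, b, i, j) := by
  unfold Icc4
  simp only [Finset.sum_product]

theorem stmt1 :
    ∃ C : ℝ, 0 < C ∧
      ∀ (w k l : ℕ), 1 ≤ w → w < k → w < l →
        ∀ (A Ahat : ℕ × ℕ × ℕ × ℕ → ℝ) (δ : ℝ), 0 < δ →
          (∀ q ∈ Icc4 k l, 0 ≤ A q) → (∑ q ∈ Icc4 k l, A q) = 1 →
          (∀ a ∈ Finset.Icc 1 k, ∀ b ∈ Finset.Icc 1 k,
            ∀ i ∈ Finset.Icc 1 l, ∀ j ∈ Finset.Icc 1 l,
              AMinus w k l A (a, b, i, j) - δ ≤ Ahat (a, b, i, j) ∧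
                Ahat (a, b, i, j) ≤ APlus w k l A (a, b, i, j) + δ) →
          l1Mat l (Proj k Ahat) (smooth2 w l (Proj k A))
            ≤ δ * ((k : ℝ) * l) ^ 2 + C / w := by
  refine ⟨640, by norm_num, ?_⟩
  intro w k l hw hk hl A Ahat δ hδ hA hA1 hyp
  have hptwise : ∀ q ∈ Icc4 k l,
      |Ahat q - smooth4 w k l A q| ≤ δ + (APlus w k l A q - AMinus w k l A q) := by
    intro q hq
    obtain ⟨a, b, i, j⟩ := q
    obtain ⟨hqa, hqb, hqi, hqj⟩ := mem_Icc4.1 hq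
    obtain ⟨hlo, hhi⟩ := hyp a hqa b hqb i hqi j hqj
    have hle1 := AMinus_le_smooth4 hw hA hq
    have hle2 := smooth4_le_APlus (w := w) hA hq
    rw [abs_sub_le_iff]
    constructor <;> linarith
  have hl1 : l1Mat l (Proj k Ahat) (smooth2 w l (Proj k A))
      ≤ ∑ q ∈ Icc4 k l, |Ahat q - smooth4 w k l A q| := by
    rw [sum_Icc4, sum4_swap]
    unfold l1Mat
    apply Finset.sum_le_sum; intro i _
    apply Finset.sum_le_sum; intro j _
    rw [proj_smooth w k l A i j]
    have hd : Proj k Ahat i j - ∑ a ∈ Finset.Icc 1 k, ∑ b ∈ Finset.Icc 1 k, smooth4 w k l A (a,b,i,j)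
        = ∑ a ∈ Finset.Icc 1 k, ∑ b ∈ Finset.Icc 1 k, (Ahat (a,b,i,j) - smooth4 w k l A (a,b,i,j)) := by
      unfold Proj
      rw [← Finset.sum_sub_distrib]
      exact Finset.sum_congr rfl fun a _ => (Finset.sum_sub_distrib _ _).symm
    rw [hd]
    refine le_trans (Finset.abs_sum_le_sum_abs _ _) ?_
    apply Finset.sum_le_sum
    intro a _
    exact Finset.abs_sum_le_sum_abs _ _
  have hw1 : (1:ℝ) ≤ (w:ℝ) := by exact_mod_cast hw
  have hcard : ((Icc4 k l).card : ℝ) * δ = δ * ((k:ℝ)*l)^2 := by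
    have : (Icc4 k l).card = k * (k * (l * l)) := by
      simp [Icc4, Finset.card_product, Nat.card_Icc]
    rw [this]
    push_cast
    ring
  calc l1Mat l (Proj k Ahat) (smooth2 w l (Proj k A))
      ≤ ∑ q ∈ Icc4 k l, |Ahat q - smooth4 w k l A q| := hl1
    _ ≤ ∑ q ∈ Icc4 k l, (δ + (APlus w k l A q - AMinus w k l A q)) :=
        Finset.sum_le_sum hptwise
    _ = δ * ((k:ℝ)*l)^2 + ((∑ q ∈ Icc4 k l, APlus w k l A q) - ∑ q ∈ Icc4 k l, AMinus w k l A q) := by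
        rw [Finset.sum_add_distrib, Finset.sum_sub_distrib, Finset.sum_const, nsmul_eq_mul, hcard]
    _ ≤ δ * ((k:ℝ)*l)^2 + ((((w:ℝ)+4)/w)^4 - ((w:ℝ)/((w:ℝ)+4))^4) := by
        have hp := sum_APlus_le hw hk hl hA hA1
        have hm := sum_AMinus_ge hw hk hl hA hA1
        linarith
    _ ≤ δ * ((k:ℝ)*l)^2 + 640 / w := by
        have := numeric (w:ℝ) hw1
        linarith
end

section
/- There exists a universal constant C_spar > 0 such that the following holds. For every ε ∈ (0,1) and n, m ∈ ℕ, suppose C_spar·n/(ε²·m) ≤ p ≤ 1. Then for every directed multigraph G on n vertices with m edges, if G' is the random multigraph obtained from G by deleting each edge independently with probability 1 − p, then with probability at least 99/100 over the choice of G', both |val_G − val_{G'}| ≤ ε and |m_{G'} − p·m| ≤ ε·p·m hold, where m_{G'} denotes the number of edges of G'. -/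
open Finset

/-- For a directed multigraph given by an edge list `e : Fin m → V × V` and a sub-multiset
of edges `s ⊆ Fin m`, the Max-DICUT value of the subgraph: the maximum over all cuts
`x : V → Bool` of the fraction of edges of `s` going from the `1`-side to the `0`-side. -/
noncomputable def mgval {V : Type} [Fintype V] [DecidableEq V] {m : ℕ}
    (e : Fin m → V × V) (s : Finset (Fin m)) : ℝ :=
  Finset.univ.sup' Finset.univ_nonempty
    (fun x : V → Bool =>
      ((s.filter (fun i => x (e i).1 = true ∧ x (e i).2 = false)).card : ℝ) / (s.card : ℝ))

lemma mgfSum {m : ℕ} (p r : ℝ) (P : Fin m → Prop) [DecidablePred P] :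
    ∑ s : Finset (Fin m), p ^ s.card * (1 - p) ^ (m - s.card) * r ^ (s.filter P).card
      = (1 - p + p * r) ^ (univ.filter P).card := by
  have key := Finset.prod_add (fun i : Fin m => p * (if P i then r else 1))
      (fun _ : Fin m => 1 - p) Finset.univ
  rw [Finset.powerset_univ] at key
  have lhs : ∏ i : Fin m, (p * (if P i then r else 1) + (1 - p))
      = (1 - p + p * r) ^ (univ.filter P).card * 1 ^ (univ.filter (fun i => ¬ P i)).card := by
    rw [show (fun i : Fin m => (p * (if P i then r else 1) + (1 - p)))
        = fun i => if P i then (1 - p + p * r) else 1 by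
      funext i; by_cases h : P i <;> simp [h] <;> ring]
    rw [Finset.prod_ite (fun _ => (1 - p + p*r)) (fun _ => (1:ℝ)),
      Finset.prod_const, Finset.prod_const]
  have rhs : ∀ t : Finset (Fin m),
      (∏ i ∈ t, (p * (if P i then r else 1))) * ∏ i ∈ univ \ t, (1 - p)
        = p ^ t.card * (1 - p) ^ (m - t.card) * r ^ (t.filter P).card := by
    intro t
    rw [Finset.prod_mul_distrib, Finset.prod_const, Finset.prod_const,
      Finset.card_sdiff_of_subset (Finset.subset_univ t), Finset.card_univ, Fintype.card_fin,
      Finset.prod_ite (fun _ => r) (fun _ => (1:ℝ)), Finset.prod_const, Finset.prod_const,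
      one_pow, mul_one]
    ring
  rw [lhs, one_pow, mul_one] at key
  rw [key]
  exact Finset.sum_congr rfl (fun t _ => (rhs t).symm)

lemma sum_w_one {m : ℕ} (p : ℝ) :
    ∑ s : Finset (Fin m), p ^ s.card * (1 - p) ^ (m - s.card) = 1 := by
  have := mgfSum (m := m) p 1 (fun _ => True)
  simpa using this

lemma tail_upper {m : ℕ} {p : ℝ} (hp0 : 0 ≤ p) (hp1 : p ≤ 1)
    (P : Fin m → Prop) [DecidablePred P] {l a : ℝ} (hl : 0 ≤ l) :
    ∑ s ∈ univ.filter (fun s : Finset (Fin m) => a ≤ ((s.filter P).card : ℝ)),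
        p ^ s.card * (1 - p) ^ (m - s.card)
      ≤ Real.exp (p * ((univ.filter P).card : ℕ) * (Real.exp l - 1) - l * a) := by
  have hw : ∀ s : Finset (Fin m), 0 ≤ p ^ s.card * (1 - p) ^ (m - s.card) := fun s =>
    mul_nonneg (pow_nonneg hp0 _) (pow_nonneg (by linarith) _)
  calc ∑ s ∈ univ.filter (fun s : Finset (Fin m) => a ≤ ((s.filter P).card : ℝ)),
        p ^ s.card * (1 - p) ^ (m - s.card)
      ≤ ∑ s ∈ univ.filter (fun s : Finset (Fin m) => a ≤ ((s.filter P).card : ℝ)),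
        Real.exp (-(l * a)) * (p ^ s.card * (1 - p) ^ (m - s.card)
          * Real.exp l ^ (s.filter P).card) := by
        refine Finset.sum_le_sum ?_
        intro s hs
        rw [Finset.mem_filter] at hs
        have hcs : Real.exp (l * a) ≤ Real.exp l ^ (s.filter P).card := by
          rw [← Real.exp_nat_mul]
          exact Real.exp_le_exp.mpr (by nlinarith [hs.2])
        have h2 := mul_le_mul_of_nonneg_left hcs
          (mul_nonneg (Real.exp_nonneg (-(l*a))) (hw s))
        calc p ^ s.card * (1 - p) ^ (m - s.card)
            = Real.exp (-(l*a)) * (p ^ s.card * (1 - p) ^ (m - s.card)) * Real.exp (l*a) := by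
              rw [mul_comm _ (Real.exp (l*a)), ← mul_assoc, ← Real.exp_add]; simp
          _ ≤ Real.exp (-(l*a)) * (p ^ s.card * (1 - p) ^ (m - s.card)) * Real.exp l ^ (s.filter P).card := h2
          _ = _ := by ring
    _ ≤ ∑ s : Finset (Fin m),
        Real.exp (-(l * a)) * (p ^ s.card * (1 - p) ^ (m - s.card)
          * Real.exp l ^ (s.filter P).card) := by
        refine Finset.sum_le_sum_of_subset_of_nonneg (Finset.filter_subset _ _) ?_
        intro s _ _
        exact mul_nonneg (Real.exp_nonneg _)
          (mul_nonneg (hw s) (pow_nonneg (Real.exp_nonneg _) _))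
    _ = Real.exp (-(l * a)) * (1 - p + p * Real.exp l) ^ (univ.filter P).card := by
        rw [← Finset.mul_sum, mgfSum]
    _ ≤ Real.exp (-(l * a)) * Real.exp (p * (Real.exp l - 1)) ^ (univ.filter P).card := by
        refine mul_le_mul_of_nonneg_left (pow_le_pow_left₀ ?_ ?_ _) (Real.exp_nonneg _)
        · have := Real.exp_pos l; nlinarith
        · have := Real.add_one_le_exp (p * (Real.exp l - 1)); linarith
    _ = Real.exp (p * ((univ.filter P).card : ℕ) * (Real.exp l - 1) - l * a) := by
        rw [← Real.exp_nat_mul, ← Real.exp_add]; ring_nf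

lemma tail_lower {m : ℕ} {p : ℝ} (hp0 : 0 ≤ p) (hp1 : p ≤ 1)
    (P : Fin m → Prop) [DecidablePred P] {l a : ℝ} (hl : 0 ≤ l) :
    ∑ s ∈ univ.filter (fun s : Finset (Fin m) => ((s.filter P).card : ℝ) ≤ a),
        p ^ s.card * (1 - p) ^ (m - s.card)
      ≤ Real.exp (p * ((univ.filter P).card : ℕ) * (Real.exp (-l) - 1) + l * a) := by
  have hw : ∀ s : Finset (Fin m), 0 ≤ p ^ s.card * (1 - p) ^ (m - s.card) := fun s =>
    mul_nonneg (pow_nonneg hp0 _) (pow_nonneg (by linarith) _)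
  calc ∑ s ∈ univ.filter (fun s : Finset (Fin m) => ((s.filter P).card : ℝ) ≤ a),
        p ^ s.card * (1 - p) ^ (m - s.card)
      ≤ ∑ s ∈ univ.filter (fun s : Finset (Fin m) => ((s.filter P).card : ℝ) ≤ a),
        Real.exp (l * a) * (p ^ s.card * (1 - p) ^ (m - s.card)
          * Real.exp (-l) ^ (s.filter P).card) := by
        refine Finset.sum_le_sum ?_
        intro s hs
        rw [Finset.mem_filter] at hs
        have hcs : Real.exp (-(l * a)) ≤ Real.exp (-l) ^ (s.filter P).card := by
          rw [← Real.exp_nat_mul]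
          exact Real.exp_le_exp.mpr (by nlinarith [hs.2])
        have h2 := mul_le_mul_of_nonneg_left hcs
          (mul_nonneg (Real.exp_nonneg (l*a)) (hw s))
        calc p ^ s.card * (1 - p) ^ (m - s.card)
            = Real.exp (l*a) * (p ^ s.card * (1 - p) ^ (m - s.card)) * Real.exp (-(l*a)) := by
              rw [mul_comm _ (Real.exp (-(l*a))), ← mul_assoc, ← Real.exp_add]; simp
          _ ≤ Real.exp (l*a) * (p ^ s.card * (1 - p) ^ (m - s.card)) * Real.exp (-l) ^ (s.filter P).card := h2
          _ = _ := by ring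
    _ ≤ ∑ s : Finset (Fin m),
        Real.exp (l * a) * (p ^ s.card * (1 - p) ^ (m - s.card)
          * Real.exp (-l) ^ (s.filter P).card) := by
        refine Finset.sum_le_sum_of_subset_of_nonneg (Finset.filter_subset _ _) ?_
        intro s _ _
        exact mul_nonneg (Real.exp_nonneg _)
          (mul_nonneg (hw s) (pow_nonneg (Real.exp_nonneg _) _))
    _ = Real.exp (l * a) * (1 - p + p * Real.exp (-l)) ^ (univ.filter P).card := by
        rw [← Finset.mul_sum, mgfSum]
    _ ≤ Real.exp (l * a) * Real.exp (p * (Real.exp (-l) - 1)) ^ (univ.filter P).card := by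
        refine mul_le_mul_of_nonneg_left (pow_le_pow_left₀ ?_ ?_ _) (Real.exp_nonneg _)
        · have := Real.exp_pos (-l); nlinarith
        · have := Real.add_one_le_exp (p * (Real.exp (-l) - 1)); linarith
    _ = Real.exp (p * ((univ.filter P).card : ℕ) * (Real.exp (-l) - 1) + l * a) := by
        rw [← Real.exp_nat_mul, ← Real.exp_add]; ring_nf

lemma exp_aux1 {l : ℝ} (h : l ≤ 1/2) : Real.exp l - 1 ≤ l + 2*l^2 := by
  have h1 : 1 - l ≤ Real.exp (-l) := by have := Real.add_one_le_exp (-l); linarith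
  have h2 : Real.exp l * Real.exp (-l) = 1 := by rw [← Real.exp_add]; simp
  have h3 : (0:ℝ) < Real.exp l := Real.exp_pos l
  have h4 : Real.exp l * (1 - l) ≤ 1 := by nlinarith
  nlinarith

lemma exp_aux2 {l : ℝ} (h0 : 0 ≤ l) : Real.exp (-l) - 1 ≤ -l + l^2 := by
  have h1 : 1 + l ≤ Real.exp l := by have := Real.add_one_le_exp l; linarith
  have h2 : Real.exp (-l) * Real.exp l = 1 := by rw [← Real.exp_add]; simp
  have h3 : (0:ℝ) < Real.exp (-l) := Real.exp_pos _
  have h4 : Real.exp (-l) * (1 + l) ≤ 1 := by nlinarith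
  nlinarith

lemma event_upper {m : ℕ} {p ε : ℝ} (hp0 : 0 ≤ p) (hp1 : p ≤ 1)
    (he0 : 0 < ε) (he1 : ε < 1) (P : Fin m → Prop) [DecidablePred P] :
    ∑ s ∈ univ.filter (fun s : Finset (Fin m) =>
        p * ((univ.filter P).card : ℕ) + (ε/4) * (p * m) ≤ ((s.filter P).card : ℝ)),
        p ^ s.card * (1 - p) ^ (m - s.card)
      ≤ Real.exp (-(ε^2 * (p * m)) / 128) := by
  refine le_trans (tail_upper hp0 hp1 P (l := ε/16)
    (a := p * ((univ.filter P).card : ℕ) + (ε/4) * (p * m)) (by linarith)) ?_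
  apply Real.exp_le_exp.mpr
  have ht : ((univ.filter P).card : ℝ) ≤ m := by
    have := Finset.card_filter_le (univ : Finset (Fin m)) P
    calc ((univ.filter P).card : ℝ) ≤ (univ : Finset (Fin m)).card := by exact_mod_cast this
      _ = m := by rw [Finset.card_univ, Fintype.card_fin]
  have h1 : Real.exp (ε/16) - 1 ≤ ε/16 + 2*(ε/16)^2 := exp_aux1 (by linarith)
  have h2 : 0 ≤ Real.exp (ε/16) - 1 := by
    have := Real.add_one_le_exp (ε/16); linarith
  have ht0 : (0:ℝ) ≤ ((univ.filter P).card : ℕ) := by positivity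
  nlinarith [mul_le_mul_of_nonneg_left ht hp0, mul_nonneg hp0 ht0,
    mul_le_mul_of_nonneg_right h1 (mul_nonneg hp0 ht0),
    mul_le_mul_of_nonneg_right (mul_le_mul_of_nonneg_left ht hp0) h2,
    mul_nonneg (mul_nonneg hp0 (le_trans ht0 ht)) (le_of_lt he0)]

lemma event_lower {m : ℕ} {p ε : ℝ} (hp0 : 0 ≤ p) (hp1 : p ≤ 1)
    (he0 : 0 < ε) (he1 : ε < 1) (P : Fin m → Prop) [DecidablePred P] :
    ∑ s ∈ univ.filter (fun s : Finset (Fin m) =>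
        ((s.filter P).card : ℝ) ≤ p * ((univ.filter P).card : ℕ) - (ε/4) * (p * m)),
        p ^ s.card * (1 - p) ^ (m - s.card)
      ≤ Real.exp (-(ε^2 * (p * m)) / 128) := by
  refine le_trans (tail_lower hp0 hp1 P (l := ε/16)
    (a := p * ((univ.filter P).card : ℕ) - (ε/4) * (p * m)) (by linarith)) ?_
  apply Real.exp_le_exp.mpr
  have ht : ((univ.filter P).card : ℝ) ≤ m := by
    have := Finset.card_filter_le (univ : Finset (Fin m)) P
    calc ((univ.filter P).card : ℝ) ≤ (univ : Finset (Fin m)).card := by exact_mod_cast this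
      _ = m := by rw [Finset.card_univ, Fintype.card_fin]
  have h1 : Real.exp (-(ε/16)) - 1 ≤ -(ε/16) + (ε/16)^2 := exp_aux2 (by linarith)
  have ht0 : (0:ℝ) ≤ ((univ.filter P).card : ℕ) := by positivity
  nlinarith [mul_le_mul_of_nonneg_left ht hp0, mul_nonneg hp0 ht0,
    mul_le_mul_of_nonneg_right h1 (mul_nonneg hp0 ht0),
    mul_le_mul_of_nonneg_right (mul_le_mul_of_nonneg_left ht hp0) (sq_nonneg (ε/16)),
    mul_nonneg (mul_nonneg hp0 (le_trans ht0 ht)) (le_of_lt he0)]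

lemma sum_filter_or_le {α : Type*} [Fintype α] [DecidableEq α] (w : α → ℝ) (hw : ∀ a, 0 ≤ w a)
    (P Q : α → Prop) [DecidablePred P] [DecidablePred Q] :
    ∑ a ∈ univ.filter (fun a => P a ∨ Q a), w a
      ≤ ∑ a ∈ univ.filter P, w a + ∑ a ∈ univ.filter Q, w a := by
  rw [Finset.filter_or]
  have h := Finset.sum_union_inter (s₁ := univ.filter P) (s₂ := univ.filter Q) (f := w)
  have h2 : 0 ≤ ∑ a ∈ univ.filter P ∩ univ.filter Q, w a :=
    Finset.sum_nonneg (fun a _ => hw a)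
  linarith

lemma sum_filter_exists_le {α X : Type*} [Fintype α] [Fintype X] (w : α → ℝ)
    (hw : ∀ a, 0 ≤ w a) (R : X → α → Prop) [∀ x, DecidablePred (R x)]
    [DecidablePred (fun a => ∃ x, R x a)] :
    ∑ a ∈ univ.filter (fun a => ∃ x, R x a), w a
      ≤ ∑ x : X, ∑ a ∈ univ.filter (R x), w a := by
  calc ∑ a ∈ univ.filter (fun a => ∃ x, R x a), w a
      ≤ ∑ a ∈ univ.filter (fun a => ∃ x, R x a), ∑ x : X, if R x a then w a else 0 := by
        refine Finset.sum_le_sum ?_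
        intro a ha
        rw [Finset.mem_filter] at ha
        obtain ⟨x0, hx0⟩ := ha.2
        have h0 : w a = if R x0 a then w a else 0 := by simp [hx0]
        refine le_trans (le_of_eq h0) (Finset.single_le_sum
          (f := fun x => if R x a then w a else 0) (fun x _ => ?_) (Finset.mem_univ x0))
        split
        · exact hw a
        · exact le_rfl
    _ ≤ ∑ a : α, ∑ x : X, if R x a then w a else 0 := by
        refine Finset.sum_le_sum_of_subset_of_nonneg (Finset.filter_subset _ _) ?_
        intro a _ _
        refine Finset.sum_nonneg (fun x _ => ?_)
        split
        · exact hw a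
        · exact le_rfl
    _ = ∑ x : X, ∑ a : α, if R x a then w a else 0 := Finset.sum_comm
    _ = ∑ x : X, ∑ a ∈ univ.filter (R x), w a := by
        refine Finset.sum_congr rfl (fun x _ => ?_)
        exact (Finset.sum_filter _ _).symm

lemma ratio_close {S cs t mm p ε : ℝ} (hm : 0 < mm) (hp : 0 < p) (he0 : 0 < ε) (he1 : ε < 1)
    (ht0 : 0 ≤ t) (htm : t ≤ mm)
    (hS : |S - p*mm| ≤ ε/4*(p*mm)) (hcs : |cs - p*t| ≤ ε/4*(p*mm)) :
    |cs/S - t/mm| ≤ ε := by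
  rw [abs_le] at hS hcs
  have hpm : 0 < p * mm := mul_pos hp hm
  have hS0 : 0 < S := by nlinarith
  rw [div_sub_div _ _ (ne_of_gt hS0) (ne_of_gt hm), abs_div,
    abs_of_pos (mul_pos hS0 hm), div_le_iff₀ (mul_pos hS0 hm), abs_le]
  have hS34 : (3/4)*(p*mm) ≤ S := by nlinarith
  have h3 : (ε/4)*(p*mm)*t ≤ (ε/4)*(p*mm)*mm :=
    mul_le_mul_of_nonneg_left htm (by positivity)
  have h4 : (ε*mm)*((3/4)*(p*mm)) ≤ (ε*mm)*S :=
    mul_le_mul_of_nonneg_left hS34 (by positivity)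
  constructor
  · nlinarith [mul_le_mul_of_nonneg_right hcs.1 hm.le,
      mul_le_mul_of_nonneg_right hS.2 ht0]
  · nlinarith [mul_le_mul_of_nonneg_right hcs.2 hm.le,
      mul_le_mul_of_nonneg_right hS.1 ht0]

lemma sup'_abs_le {β : Type*} [Fintype β] [Nonempty β] (f g : β → ℝ) {ε : ℝ}
    (h : ∀ b, |f b - g b| ≤ ε) :
    |univ.sup' univ_nonempty f - univ.sup' univ_nonempty g| ≤ ε := by
  have he : 0 ≤ ε := le_trans (abs_nonneg _) (h (Classical.arbitrary β))
  rw [abs_le]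
  constructor
  · rw [neg_le, neg_sub]
    have : univ.sup' univ_nonempty g ≤ univ.sup' univ_nonempty f + ε := by
      refine Finset.sup'_le _ _ (fun b _ => ?_)
      have hb := (abs_le.mp (h b)).1
      have := Finset.le_sup' f (Finset.mem_univ b)
      linarith
    linarith
  · have : univ.sup' univ_nonempty f ≤ univ.sup' univ_nonempty g + ε := by
      refine Finset.sup'_le _ _ (fun b _ => ?_)
      have hb := (abs_le.mp (h b)).2
      have := Finset.le_sup' g (Finset.mem_univ b)
      linarith
    linarith

theorem stmt9 :
    ∃ C : ℝ, 0 < C ∧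
      ∀ ε : ℝ, 0 < ε → ε < 1 →
      ∀ (n m : ℕ) (p : ℝ),
        C * n / (ε ^ 2 * m) ≤ p → p ≤ 1 →
        ∀ (V : Type) [Fintype V] [DecidableEq V], Fintype.card V = n →
        ∀ e : Fin m → V × V, (∀ i, (e i).1 ≠ (e i).2) →
          -- the probability, over keeping each edge independently with probability `p`,
          -- that both the Max-DICUT value and the number of surviving edges are preserved
          (99 : ℝ) / 100 ≤
            ∑ s ∈ (Finset.univ : Finset (Finset (Fin m))).filter
                (fun s =>
                  |mgval e Finset.univ - mgval e s| ≤ ε ∧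
                  |(s.card : ℝ) - p * m| ≤ ε * (p * m)),
              p ^ s.card * (1 - p) ^ (m - s.card) := by
  classical
  refine ⟨12800, by norm_num, ?_⟩
  intro ε he0 he1 n m p hClow hp1 V _ _ hcard e hne
  rcases Nat.eq_zero_or_pos m with hm0 | hmpos
  · -- trivial case m = 0
    subst hm0
    have hall : ∀ s : Finset (Fin 0), s = ∅ :=
      fun s => Finset.eq_empty_of_forall_notMem (fun i => i.elim0)
    have hmg : ∀ s : Finset (Fin 0), mgval e s = 0 := by
      intro s
      unfold mgval
      rw [show (fun x : V → Bool =>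
          ((s.filter (fun i => x (e i).1 = true ∧ x (e i).2 = false)).card : ℝ) / (s.card : ℝ))
          = fun _ => (0:ℝ) from funext (fun x => by rw [hall s]; simp)]
      exact Finset.sup'_const _ 0
    rw [Finset.filter_true_of_mem (fun s _ => ?_)]
    · have hterm : ∀ s : Finset (Fin 0), p ^ s.card * (1-p) ^ (0 - s.card) = 1 := by
        intro s; rw [hall s]; simp
      rw [Finset.sum_congr rfl (fun s _ => hterm s), Finset.sum_const]
      simp
      norm_num
    · constructor
      · rw [hmg, hmg]; simpa using he0.le
      · rw [show ((s.card : ℝ)) = 0 by rw [hall s]; simp]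
        simp
  · -- main case m ≥ 1
    have hn2 : 2 ≤ n := by
      rw [← hcard]
      have : 1 < Fintype.card V :=
        Fintype.one_lt_card_iff.mpr ⟨_, _, hne ⟨0, hmpos⟩⟩
      omega
    have hn0 : (0:ℝ) < n := by exact_mod_cast (by omega : 0 < n)
    have hmR : (0:ℝ) < m := by exact_mod_cast hmpos
    have hp0 : 0 < p :=
      lt_of_lt_of_le (div_pos (by positivity) (by positivity)) hClow
    have hkey : 12800 * (n:ℝ) ≤ ε^2 * (p * m) := by
      have := (div_le_iff₀ (by positivity : (0:ℝ) < ε^2 * m)).mp hClow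
      nlinarith
    have hw : ∀ s : Finset (Fin m), 0 ≤ p ^ s.card * (1 - p) ^ (m - s.card) := fun s =>
      mul_nonneg (pow_nonneg hp0.le _) (pow_nonneg (by linarith) _)
    set P : (V → Bool) → Fin m → Prop :=
      fun x i => x (e i).1 = true ∧ x (e i).2 = false with hP
    set good : Finset (Fin m) → Prop := fun s =>
      (|(s.card : ℝ) - p * m| ≤ ε/4 * (p * m)) ∧
      ∀ x : V → Bool, |((s.filter (P x)).card : ℝ) - p * ((univ.filter (P x)).card : ℕ)|
        ≤ ε/4 * (p * m) with hgood
    -- probability of bad count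
    have hbadcnt : ∑ s ∈ univ.filter (fun s : Finset (Fin m) =>
          ¬ (|(s.card : ℝ) - p * m| ≤ ε/4 * (p * m))),
          p ^ s.card * (1 - p) ^ (m - s.card)
        ≤ 2 * Real.exp (-(ε^2 * (p * m)) / 128) := by
      have hu := event_upper hp0.le hp1 he0 he1 (fun _ : Fin m => True)
      have hl := event_lower hp0.le hp1 he0 he1 (fun _ : Fin m => True)
      simp only [Finset.filter_true, Finset.card_univ, Fintype.card_fin] at hu hl
      have hsub : ∑ s ∈ univ.filter (fun s : Finset (Fin m) =>
            ¬ (|(s.card : ℝ) - p * m| ≤ ε/4 * (p * m))),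
            p ^ s.card * (1 - p) ^ (m - s.card)
          ≤ ∑ s ∈ univ.filter (fun s : Finset (Fin m) =>
            (p * m + ε/4 * (p * m) ≤ (s.card : ℝ)) ∨ ((s.card : ℝ) ≤ p * m - ε/4 * (p * m))),
            p ^ s.card * (1 - p) ^ (m - s.card) := by
        refine Finset.sum_le_sum_of_subset_of_nonneg
          (Finset.monotone_filter_right _ ?_) (fun s _ _ => hw s)
        intro s _ h
        rw [not_le] at h
        rcases lt_abs.mp h with h' | h'
        · left; linarith
        · right; linarith
      refine le_trans hsub (le_trans (sum_filter_or_le _ hw _ _) (by linarith))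
    -- probability of bad cut values
    have hbadcut : ∑ s ∈ univ.filter (fun s : Finset (Fin m) =>
          ∃ x : V → Bool, ¬ (|((s.filter (P x)).card : ℝ)
            - p * ((univ.filter (P x)).card : ℕ)| ≤ ε/4 * (p * m))),
          p ^ s.card * (1 - p) ^ (m - s.card)
        ≤ (2:ℝ)^n * (2 * Real.exp (-(ε^2 * (p * m)) / 128)) := by
      refine le_trans (sum_filter_exists_le _ hw _) ?_
      have hx : ∀ x : V → Bool, ∑ s ∈ univ.filter (fun s : Finset (Fin m) =>
            ¬ (|((s.filter (P x)).card : ℝ)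
              - p * ((univ.filter (P x)).card : ℕ)| ≤ ε/4 * (p * m))),
            p ^ s.card * (1 - p) ^ (m - s.card)
          ≤ 2 * Real.exp (-(ε^2 * (p * m)) / 128) := by
        intro x
        have hu := event_upper hp0.le hp1 he0 he1 (P x)
        have hl := event_lower hp0.le hp1 he0 he1 (P x)
        have hsub : ∑ s ∈ univ.filter (fun s : Finset (Fin m) =>
              ¬ (|((s.filter (P x)).card : ℝ)
                - p * ((univ.filter (P x)).card : ℕ)| ≤ ε/4 * (p * m))),
              p ^ s.card * (1 - p) ^ (m - s.card)
            ≤ ∑ s ∈ univ.filter (fun s : Finset (Fin m) =>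
              (p * ((univ.filter (P x)).card : ℕ) + (ε/4) * (p * m)
                ≤ ((s.filter (P x)).card : ℝ)) ∨
              (((s.filter (P x)).card : ℝ)
                ≤ p * ((univ.filter (P x)).card : ℕ) - (ε/4) * (p * m))),
              p ^ s.card * (1 - p) ^ (m - s.card) := by
          refine Finset.sum_le_sum_of_subset_of_nonneg
            (Finset.monotone_filter_right _ ?_) (fun s _ _ => hw s)
          intro s _ h
          rw [not_le] at h
          rcases lt_abs.mp h with h' | h'
          · left; linarith
          · right; linarith
        refine le_trans hsub (le_trans (sum_filter_or_le _ hw _ _) (by linarith))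
      refine le_trans (Finset.sum_le_sum (fun x _ => hx x)) ?_
      rw [Finset.sum_const, Finset.card_univ, nsmul_eq_mul]
      have : (Fintype.card (V → Bool) : ℝ) = (2:ℝ)^n := by
        rw [show Fintype.card (V → Bool) = 2^n by
          simp [Fintype.card_fun, hcard]]
        push_cast
        ring
      rw [this]
    -- union bound for bad sets
    have hbadgood : ∑ s ∈ univ.filter (fun s : Finset (Fin m) => ¬ good s),
          p ^ s.card * (1 - p) ^ (m - s.card)
        ≤ 2 * Real.exp (-(ε^2 * (p * m)) / 128)
          + (2:ℝ)^n * (2 * Real.exp (-(ε^2 * (p * m)) / 128)) := by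
      have hsub : ∑ s ∈ univ.filter (fun s : Finset (Fin m) => ¬ good s),
            p ^ s.card * (1 - p) ^ (m - s.card)
          ≤ ∑ s ∈ univ.filter (fun s : Finset (Fin m) =>
              (¬ (|(s.card : ℝ) - p * m| ≤ ε/4 * (p * m))) ∨
              (∃ x : V → Bool, ¬ (|((s.filter (P x)).card : ℝ)
                - p * ((univ.filter (P x)).card : ℕ)| ≤ ε/4 * (p * m)))),
            p ^ s.card * (1 - p) ^ (m - s.card) := by
        refine Finset.sum_le_sum_of_subset_of_nonneg
          (Finset.monotone_filter_right _ ?_) (fun s _ _ => hw s)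
        intro s _ h
        simp only [hgood] at h
        rw [not_and_or, not_forall] at h
        exact h
      exact le_trans hsub (le_trans (sum_filter_or_le _ hw _ _)
        (add_le_add hbadcnt hbadcut))
    -- numeric bound
    have hnum : 2 * Real.exp (-(ε^2 * (p * m)) / 128)
          + (2:ℝ)^n * (2 * Real.exp (-(ε^2 * (p * m)) / 128)) ≤ 1/100 := by
      have hE : Real.exp (-(ε^2 * (p * m)) / 128) ≤ Real.exp (-100 * n) := by
        apply Real.exp_le_exp.mpr
        linarith
      have hEpos : 0 < Real.exp (-(ε^2 * (p * m)) / 128) := Real.exp_pos _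
      have h2n1 : (1:ℝ) ≤ (2:ℝ)^n := one_le_pow₀ (by norm_num)
      have hchain : (2:ℝ)^n * Real.exp (-100 * n) ≤ (1/50:ℝ)^2 := by
        have hexp : Real.exp (-100 * (n:ℝ)) = Real.exp (-100) ^ n := by
          rw [← Real.exp_nat_mul]; ring_nf
        have hb : (2:ℝ) * Real.exp (-100) ≤ 1/50 := by
          have h101 : (101:ℝ) ≤ Real.exp 100 := by
            have := Real.add_one_le_exp (100:ℝ); linarith
          have hneg : Real.exp (-100) = (Real.exp 100)⁻¹ := Real.exp_neg 100
          have := Real.exp_pos (100:ℝ)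
          rw [hneg, inv_eq_one_div, mul_one_div,
            div_le_div_iff₀ (by positivity) (by norm_num : (0:ℝ) < 50)]
          linarith
        calc (2:ℝ)^n * Real.exp (-100 * n)
            = (2 * Real.exp (-100))^n := by rw [hexp, mul_pow]
          _ ≤ (1/50:ℝ)^n := pow_le_pow_left₀ (by positivity) hb n
          _ ≤ (1/50:ℝ)^2 := pow_le_pow_of_le_one (by norm_num) (by norm_num) hn2
      have hEn : (2:ℝ)^n * Real.exp (-(ε^2 * (p * m)) / 128) ≤ (1/50:ℝ)^2 := by
        calc (2:ℝ)^n * Real.exp (-(ε^2 * (p * m)) / 128)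
            ≤ (2:ℝ)^n * Real.exp (-100 * n) :=
              mul_le_mul_of_nonneg_left hE (by positivity)
          _ ≤ (1/50:ℝ)^2 := hchain
      have h2E : 2 * Real.exp (-(ε^2 * (p * m)) / 128)
          ≤ (2:ℝ)^n * (2 * Real.exp (-(ε^2 * (p * m)) / 128)) := by
        nlinarith
      nlinarith
    -- good sets satisfy the required condition
    have himp : ∀ s : Finset (Fin m), good s →
        (|mgval e Finset.univ - mgval e s| ≤ ε ∧
          |(s.card : ℝ) - p * m| ≤ ε * (p * m)) := by
      intro s hs
      obtain ⟨hA, hB⟩ := hs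
      have hpm : 0 < p * (m:ℝ) := mul_pos hp0 hmR
      constructor
      · unfold mgval
        refine sup'_abs_le _ _ (fun x => ?_)
        rw [abs_sub_comm]
        rw [show (((univ : Finset (Fin m)).card : ℕ) : ℝ) = (m:ℝ) by
          rw [Finset.card_univ, Fintype.card_fin]]
        have hBx := hB x
        simp only [hP] at hBx
        have ht : ((univ.filter (fun i : Fin m =>
            x (e i).1 = true ∧ x (e i).2 = false)).card : ℝ) ≤ m := by
          have := Finset.card_filter_le (univ : Finset (Fin m))
            (fun i => x (e i).1 = true ∧ x (e i).2 = false)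
          calc ((univ.filter _).card : ℝ) ≤ ((univ : Finset (Fin m)).card : ℝ) := by
                exact_mod_cast this
            _ = m := by rw [Finset.card_univ, Fintype.card_fin]
        exact ratio_close hmR hp0 he0 he1 (by positivity) ht hA hBx
      · refine le_trans hA ?_
        nlinarith
    -- conclude
    have hsplit := Finset.sum_filter_add_sum_filter_not
      (univ : Finset (Finset (Fin m))) good
      (fun s => p ^ s.card * (1 - p) ^ (m - s.card))
    rw [sum_w_one] at hsplit
    have hgoodbig : (99:ℝ)/100 ≤ ∑ s ∈ univ.filter good,
        p ^ s.card * (1 - p) ^ (m - s.card) := by linarith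
    refine le_trans hgoodbig ?_
    refine Finset.sum_le_sum_of_subset_of_nonneg
      (Finset.monotone_filter_right _ ?_) (fun s _ _ => hw s)
    intro s _ h
    exact himp s h
end

section
/- Let X_1,…,X_n be random variables on a probability space with 0 ≤ X_i ≤ 1 almost surely for each i, and let X = Σ_{i=1}^n X_i. Suppose there is D ∈ ℕ such that for each i ∈ {1,…,n}, the set of indices j ∈ {1,…,n} for which X_i and X_j are not (pairwise) independent has size at most D. Then for all η > 0, Pr[|X − E[X]| ≥ η] ≤ D·E[X]/η². In particular, if the X_i are pairwise independent, then Pr[|X − E[X]| ≥ η] ≤ E[X]/η². -/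
open MeasureTheory ProbabilityTheory
open scoped Classical

theorem stmt10 {Ω : Type} [MeasurableSpace Ω] (μ : Measure Ω)
    [IsProbabilityMeasure μ] (n : ℕ) (X : Fin n → Ω → ℝ)
    (hmeas : ∀ i, Measurable (X i))
    (hbound : ∀ i, ∀ᵐ ω ∂μ, 0 ≤ X i ω ∧ X i ω ≤ 1) :
    (∀ D : ℕ,
      (∀ i, (Finset.univ.filter (fun j => ¬ IndepFun (X i) (X j) μ)).card ≤ D) →
      ∀ η : ℝ, 0 < η →
        (μ {ω | η ≤ |(∑ i, X i ω) - ∫ ω', (∑ i, X i ω') ∂μ|}).toReal ≤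
          (D : ℝ) * (∫ ω', (∑ i, X i ω') ∂μ) / η ^ 2) ∧
    ((∀ i j, i ≠ j → IndepFun (X i) (X j) μ) →
      ∀ η : ℝ, 0 < η →
        (μ {ω | η ≤ |(∑ i, X i ω) - ∫ ω', (∑ i, X i ω') ∂μ|}).toReal ≤
          (∫ ω', (∑ i, X i ω') ∂μ) / η ^ 2) := by
  -- basic facts
  have hXmem : ∀ i, MemLp (X i) 2 μ := by
    intro i
    refine MemLp.of_bound (hmeas i).aestronglyMeasurable 1 ?_
    filter_upwards [hbound i] with ω ⟨h0, h1⟩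
    rw [Real.norm_eq_abs, abs_le]; constructor <;> linarith
  have hXint : ∀ i, Integrable (X i) μ := fun i => (hXmem i).integrable one_le_two
  have hSmem : MemLp (fun ω => ∑ i, X i ω) 2 μ := by
    have h := memLp_finsetSum' Finset.univ (fun i (_ : i ∈ Finset.univ) => hXmem i)
    have he : (fun ω => ∑ i, X i ω) = ∑ i, X i := by ext ω; simp
    rwa [he]
  have hmulint : ∀ i j, Integrable (fun ω => X i ω * X j ω) μ := by
    intro i j
    refine (MemLp.of_bound ((hmeas i).mul (hmeas j)).aestronglyMeasurable 1 ?_).integrable le_rfl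
    filter_upwards [hbound i, hbound j] with ω ⟨h0i, h1i⟩ ⟨h0j, h1j⟩
    rw [Real.norm_eq_abs, abs_le, Pi.mul_apply]; constructor <;> nlinarith
  have hm_nonneg : ∀ i, 0 ≤ ∫ ω, X i ω ∂μ := fun i =>
    integral_nonneg_of_ae ((hbound i).mono (fun ω h => h.1))
  -- variance expansion
  have hvar : variance (fun ω => ∑ i, X i ω) μ =
      ∑ i, ∑ j, ((∫ ω, X i ω * X j ω ∂μ) - (∫ ω, X i ω ∂μ) * (∫ ω, X j ω ∂μ)) := by
    rw [variance_eq_sub hSmem]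
    have h1 : (μ[(fun ω => ∑ i, X i ω) ^ 2]) = ∑ i, ∑ j, ∫ ω, X i ω * X j ω ∂μ := by
      have : ∀ ω, ((fun ω => ∑ i, X i ω) ^ 2) ω = ∑ i, ∑ j, X i ω * X j ω := by
        intro ω
        simp [sq, Finset.sum_mul_sum]
      rw [show ((fun ω => ∑ i, X i ω) ^ 2) = fun ω => ∑ i, ∑ j, X i ω * X j ω from funext this]
      rw [integral_finset_sum _ (fun i _ => integrable_finset_sum _ (fun j _ => hmulint i j))]
      exact Finset.sum_congr rfl fun i _ =>
        integral_finset_sum _ (fun j _ => hmulint i j)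
    have h2 : (μ[fun ω => ∑ i, X i ω]) = ∑ i, ∫ ω, X i ω ∂μ :=
      integral_finset_sum _ (fun i _ => hXint i)
    rw [h1, h2, sq, Finset.sum_mul_sum, ← Finset.sum_sub_distrib]
    exact Finset.sum_congr rfl fun i _ => (Finset.sum_sub_distrib _ _).symm
  -- main part
  have main : ∀ D : ℕ,
      (∀ i, (Finset.univ.filter (fun j => ¬ IndepFun (X i) (X j) μ)).card ≤ D) →
      ∀ η : ℝ, 0 < η →
        (μ {ω | η ≤ |(∑ i, X i ω) - ∫ ω', (∑ i, X i ω') ∂μ|}).toReal ≤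
          (D : ℝ) * (∫ ω', (∑ i, X i ω') ∂μ) / η ^ 2 := by
    intro D hD η hη
    have hvb : variance (fun ω => ∑ i, X i ω) μ ≤ (D : ℝ) * ∫ ω', (∑ i, X i ω') ∂μ := by
      rw [hvar, integral_finset_sum _ (fun i _ => hXint i), Finset.mul_sum]
      refine Finset.sum_le_sum fun i _ => ?_
      set t : Fin n → ℝ := fun j =>
        (∫ ω, X i ω * X j ω ∂μ) - (∫ ω, X i ω ∂μ) * (∫ ω, X j ω ∂μ) with ht
      set bad := Finset.univ.filter (fun j => ¬ IndepFun (X i) (X j) μ) with hbad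
      have hz : ∀ j ∈ Finset.univ, j ∉ bad → t j = 0 := by
        intro j _ hj
        simp only [hbad, Finset.mem_filter, Finset.mem_univ, true_and, not_not] at hj
        have := hj.integral_mul_eq_mul_integral (hXint i).aestronglyMeasurable (hXint j).aestronglyMeasurable
        simp only [ht]
        rw [show (fun ω => X i ω * X j ω) = X i * X j from rfl, this]
        ring
      have heq : ∑ j, t j = ∑ j ∈ bad, t j :=
        (Finset.sum_subset (Finset.filter_subset _ _) hz).symm
      rw [heq]
      have hterm : ∀ j ∈ bad, t j ≤ ∫ ω, X i ω ∂μ := by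
        intro j _
        have h1 : (∫ ω, X i ω * X j ω ∂μ) ≤ ∫ ω, X i ω ∂μ := by
          refine integral_mono_ae (hmulint i j) (hXint i) ?_
          filter_upwards [hbound i, hbound j] with ω ⟨h0i, h1i⟩ ⟨h0j, h1j⟩
          nlinarith
        have h2 : 0 ≤ (∫ ω, X i ω ∂μ) * (∫ ω, X j ω ∂μ) :=
          mul_nonneg (hm_nonneg i) (hm_nonneg j)
        simp only [ht]; linarith
      calc ∑ j ∈ bad, t j ≤ ∑ j ∈ bad, ∫ ω, X i ω ∂μ := Finset.sum_le_sum hterm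
        _ = (bad.card : ℝ) * ∫ ω, X i ω ∂μ := by rw [Finset.sum_const, nsmul_eq_mul]
        _ ≤ (D : ℝ) * ∫ ω, X i ω ∂μ := by
            exact mul_le_mul_of_nonneg_right (by exact_mod_cast hD i) (hm_nonneg i)
    have hcheb := meas_ge_le_variance_div_sq (μ := μ) hSmem hη
    have := ENNReal.toReal_mono (by simp) hcheb
    rw [ENNReal.toReal_ofReal (div_nonneg (variance_nonneg _ _) (by positivity))] at this
    refine this.trans ?_
    exact div_le_div_of_nonneg_right hvb (by positivity) |>.trans_eq rfl
  refine ⟨main, fun hindep η hη => ?_⟩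
  have h1 : ∀ i, (Finset.univ.filter (fun j => ¬ IndepFun (X i) (X j) μ)).card ≤ 1 := by
    intro i
    have hkey : ∀ c ∈ Finset.univ.filter (fun j => ¬ IndepFun (X i) (X j) μ), c = i := by
      intro c hc
      simp only [Finset.mem_filter, Finset.mem_univ, true_and] at hc
      by_contra hci
      exact hc (hindep i c (Ne.symm hci))
    exact Finset.card_le_one.mpr fun a ha b hb => (hkey a ha).trans (hkey b hb).symm
  have := main 1 h1 η hη
  simpa using this
end

section
/- Let V be a finite set with a distinguished element ⋆ ∈ V, and let L be a weighted directed graph on V. Let p ∈ V with p ≠ ⋆ and Adj_L(p,⋆) = 0, and let α ≥ 0 and 0 ≤ β ≤ deg-out_L(p). Then there exists a weighted directed graph L' on V such that: (1) for all q ∈ V with q ∉ {p, ⋆}, deg-out_{L'}(q) = deg-out_L(q) and deg-in_{L'}(q) = deg-in_L(q); (2) deg-out_{L'}(p) = deg-out_L(p) − β and deg-in_{L'}(p) = deg-in_L(p) + α; (3) m_{L'} = m_L + α; and (4) Σ_{u,v ∈ V} |Adj_{L'}(u,v) − Adj_L(u,v)| = α + 2β. The same holds with the roles of out-degrees and in-degrees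 swapped (assuming instead Adj_L(⋆,p) = 0 and 0 ≤ β ≤ deg-in_L(p)). -/
open Finset

/-- A weighted directed graph on a finite vertex set `V`: a nonnegative adjacency matrix
with zero diagonal. -/
structure WGraphOn (V : Type) [Fintype V] where
  Adj : V → V → ℝ
  nonneg : ∀ u v, 0 ≤ Adj u v
  diag : ∀ v, Adj v v = 0

variable {V : Type} [Fintype V]

/-- The total weight `m_G`. -/
noncomputable def mTot (G : WGraphOn V) : ℝ := ∑ u, ∑ v, G.Adj u v

/-- The out-degree `deg-out_G(v)`. -/
noncomputable def degOut (G : WGraphOn V) (v : V) : ℝ := ∑ u, G.Adj v u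

/-- The in-degree `deg-in_G(v)`. -/
noncomputable def degIn (G : WGraphOn V) (v : V) : ℝ := ∑ u, G.Adj u v

/-- The total degree `deg_G(v)`. -/
noncomputable def deg (G : WGraphOn V) (v : V) : ℝ := degOut G v + degIn G v

/-- The bias `bias_G(v) = (deg-out_G(v) − deg-in_G(v))/deg_G(v)` (junk value `0` at
isolated vertices, where all incident weights vanish anyway). -/
noncomputable def bias (G : WGraphOn V) (v : V) : ℝ := (degOut G v - degIn G v) / deg G v

/-- The (normalized) value `val_G(x)` of a cut `x`. -/
noncomputable def cutVal (G : WGraphOn V) (x : V → Bool) : ℝ :=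
  (1 / mTot G) * ∑ u, ∑ v, G.Adj u v * (if x u then 1 else 0) * (if x v then 0 else 1)

/-- The Max-DICUT value `val_G`, the maximum of `val_G(x)` over all cuts. -/
noncomputable def gval [DecidableEq V] (G : WGraphOn V) : ℝ :=
  Finset.univ.sup' Finset.univ_nonempty (cutVal G)

/-- The index `ind^t(x)` of `x` with respect to the threshold vector `(t 0, …, t ℓ)`:
the unique `i ∈ {1,…,ℓ}` with `t (i−1) ≤ x < t i`, and `ℓ` when `x = t ℓ`. -/
noncomputable def tInd (t : ℕ → ℝ) (l : ℕ) (x : ℝ) : ℕ :=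
  if x = t l then l
  else ∑ i ∈ (Finset.Icc 1 l).filter (fun i => t (i - 1) ≤ x ∧ x < t i), i

/-- The snapshot `Snap_{G,t}`. -/
noncomputable def Snap (G : WGraphOn V) (t : ℕ → ℝ) (l : ℕ) (i j : ℕ) : ℝ :=
  (1 / mTot G) * ∑ u, ∑ v,
    (if tInd t l (bias G u) = i ∧ tInd t l (bias G v) = j then G.Adj u v else 0)

lemma aux_main (star p : V) (L : WGraphOn V) (hp : p ≠ star) (α β : ℝ)
    (hα : 0 ≤ α) (hβ : 0 ≤ β) (h0 : L.Adj p star = 0) (hβd : β ≤ degOut L p) :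
    ∃ L' : WGraphOn V,
        (∀ q, q ≠ p → q ≠ star →
          degOut L' q = degOut L q ∧ degIn L' q = degIn L q) ∧
        degOut L' p = degOut L p - β ∧
        degIn L' p = degIn L p + α ∧
        mTot L' = mTot L + α ∧
        (∑ u, ∑ v, |L'.Adj u v - L.Adj u v|) = α + 2 * β := by
  classical
  set d := degOut L p with hd
  have hd0 : 0 ≤ d := Finset.sum_nonneg fun u _ => L.nonneg p u
  set c := β / d with hc
  have hc0 : 0 ≤ c := div_nonneg hβ hd0
  have hcd : c * d = β := by
    rcases eq_or_lt_of_le hd0 with h | h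
    · have hb : β = 0 := le_antisymm (by rw [← h] at hβd; exact hβd) hβ
      simp [hc, hb]
    · rw [hc, div_mul_cancel₀ β h.ne']
  have hc1 : c ≤ 1 := by
    rcases eq_or_lt_of_le hd0 with h | h
    · simp [hc, ← h]
    · exact (div_le_one h).mpr hβd
  have hrow : ∑ v, c * L.Adj p v = β := by
    rw [← Finset.mul_sum, ← degOut, ← hd, hcd]
  refine ⟨⟨fun u v => L.Adj u v + (if u = p then -(c * L.Adj p v) else 0)
      + (if u = star then c * L.Adj p v + (if v = p then α else 0) else 0),
      ?_, ?_⟩, ?_, ?_, ?_, ?_, ?_⟩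
  · intro u v
    have h1 := L.nonneg u v
    have h2 := L.nonneg p v
    by_cases hu : u = p
    · have hus : u ≠ star := hu ▸ hp
      rw [if_pos hu, if_neg hus, hu]
      nlinarith [hu ▸ h1]
    · by_cases hu2 : u = star
      · simp only [if_neg hu, if_pos hu2]
        by_cases hv : v = p
        · simp only [if_pos hv]; nlinarith
        · simp only [if_neg hv]; nlinarith
      · simp [hu, hu2, h1]
  · intro v
    by_cases hv : v = p
    · simp [hv, hp, L.diag]
    · by_cases hv2 : v = star
      · simp [hv2, h0, L.diag, Ne.symm hp]
      · simp [hv, hv2, L.diag]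
  · intro q hq hq2
    constructor
    · simp [degOut, hq, hq2]
    · dsimp only [degIn]
      simp only [ Finset.sum_add_distrib, Finset.sum_ite_eq', Finset.mem_univ,
        if_true, if_neg hq]
      ring
  · dsimp only [degOut]
    simp only [eq_self_iff_true, if_true, if_neg hp, add_zero]
    rw [Finset.sum_add_distrib, Finset.sum_neg_distrib, hrow]
    have hdd : (∑ x : V, L.Adj p x) = d := rfl
    rw [hdd]
    ring
  · dsimp only [degIn]
    simp only [Finset.sum_add_distrib, Finset.sum_ite_eq', Finset.mem_univ, if_true]
    rw [L.diag p]
    simp [Ne.symm hp]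
  · dsimp only [mTot]
    simp only [Finset.sum_add_distrib]
    have h1 : ∑ u : V, ∑ v : V, (if u = p then -(c * L.Adj p v) else 0) = -β := by
      rw [Finset.sum_comm]
      simp only [Finset.sum_ite_eq', Finset.mem_univ, if_true]
      rw [Finset.sum_neg_distrib, hrow]
    have h2 : ∑ u : V, ∑ v : V,
        (if u = star then c * L.Adj p v + (if v = p then α else 0) else 0) = β + α := by
      rw [Finset.sum_comm]
      simp only [Finset.sum_ite_eq', Finset.mem_univ, if_true]
      rw [Finset.sum_add_distrib, hrow]
      simp
    rw [h1, h2]; ring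
  · dsimp only
    have key : ∀ u v : V,
        |(L.Adj u v + (if u = p then -(c * L.Adj p v) else 0)
          + (if u = star then c * L.Adj p v + (if v = p then α else 0) else 0)) - L.Adj u v|
        = (if u = p then c * L.Adj p v else 0)
          + (if u = star then c * L.Adj p v + (if v = p then α else 0) else 0) := by
      intro u v
      have h2 := L.nonneg p v
      by_cases hu : u = p
      · have hus : u ≠ star := hu ▸ hp
        simp only [if_pos hu, if_neg hus, add_zero]
        have : L.Adj u v + -(c * L.Adj p v) - L.Adj u v = -(c * L.Adj p v) := by ring
        rw [this, abs_neg, abs_of_nonneg (mul_nonneg hc0 h2)]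
      · by_cases hu2 : u = star
        · simp only [if_neg hu, if_pos hu2]
          have : L.Adj u v + 0 + (c * L.Adj p v + (if v = p then α else 0)) - L.Adj u v
              = c * L.Adj p v + (if v = p then α else 0) := by ring
          have hnn : 0 ≤ c * L.Adj p v + (if v = p then α else 0) := by
            by_cases hv : v = p
            · rw [if_pos hv]; positivity
            · rw [if_neg hv]; positivity
          rw [this, abs_of_nonneg hnn]
          ring
        · simp [hu, hu2]
    simp only [key]
    simp only [Finset.sum_add_distrib]
    have ha : ∑ u : V, ∑ v : V, (if u = p then c * L.Adj p v else 0) = β := by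
      rw [Finset.sum_comm]
      simp only [Finset.sum_ite_eq', Finset.mem_univ, if_true]
      exact hrow
    have hb : ∑ u : V, ∑ v : V,
        (if u = star then c * L.Adj p v + (if v = p then α else 0) else 0) = β + α := by
      rw [Finset.sum_comm]
      simp only [Finset.sum_ite_eq', Finset.mem_univ, if_true]
      rw [Finset.sum_add_distrib, hrow]
      simp
    rw [ha, hb]; ring

def WGraphOn.transp (G : WGraphOn V) : WGraphOn V :=
  ⟨fun u v => G.Adj v u, fun u v => G.nonneg v u, G.diag⟩

theorem stmt17 (V : Type) [Fintype V] (star p : V) (L : WGraphOn V)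
    (hp : p ≠ star) (α β : ℝ) (hα : 0 ≤ α) (hβ : 0 ≤ β) :
    (L.Adj p star = 0 → β ≤ degOut L p →
      ∃ L' : WGraphOn V,
        (∀ q, q ≠ p → q ≠ star →
          degOut L' q = degOut L q ∧ degIn L' q = degIn L q) ∧
        degOut L' p = degOut L p - β ∧
        degIn L' p = degIn L p + α ∧
        mTot L' = mTot L + α ∧
        (∑ u, ∑ v, |L'.Adj u v - L.Adj u v|) = α + 2 * β) ∧
    (L.Adj star p = 0 → β ≤ degIn L p →
      ∃ L' : WGraphOn V,
        (∀ q, q ≠ p → q ≠ star →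
          degOut L' q = degOut L q ∧ degIn L' q = degIn L q) ∧
        degIn L' p = degIn L p - β ∧
        degOut L' p = degOut L p + α ∧
        mTot L' = mTot L + α ∧
        (∑ u, ∑ v, |L'.Adj u v - L.Adj u v|) = α + 2 * β) := by
  constructor
  · intro h0 hβd
    exact aux_main star p L hp α β hα hβ h0 hβd
  · intro h0 hβd
    obtain ⟨L'', h1, h2, h3, h4, h5⟩ :=
      aux_main star p L.transp hp α β hα hβ h0 hβd
    refine ⟨L''.transp, fun q hq hq2 => ⟨(h1 q hq hq2).2, (h1 q hq hq2).1⟩,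
      h2, h3, ?_, ?_⟩
    · have e1 : mTot L''.transp = mTot L'' := Finset.sum_comm
      have e2 : mTot L.transp = mTot L := Finset.sum_comm
      rw [e1, h4, e2]
    · rw [Finset.sum_comm]
      exact h5
end
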